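/- arXiv:1406.7758 — 8 statements merged into one kernel-verified Lean document; each statement's English description precedes it below -/
import Mathlib

section
/- Let K be a T×T real symmetric positive definite matrix, f ∈ ℝ^T and σ > 0. Then fᵀ (K + σ² I)^{−2} f ≤ σ^{−2} fᵀ K^{−1} f. -/
open Matrix

/-- For a symmetric positive definite `K`, `f ∈ ℝ^T`, `σ > 0`:
`fᵀ (K + σ²I)⁻² f ≤ σ⁻² fᵀ K⁻¹ f`. -/
theorem quadratic_form_inv_sq_bound
    (T : ℕ) (K : Matrix (Fin T) (Fin T) ℝ) (hK : K.PosDef)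
    (f : Fin T → ℝ) (σ : ℝ) (hσ : 0 < σ) :
    f ⬝ᵥ (((K + σ ^ 2 • 1)⁻¹) ^ 2).mulVec f ≤ (σ ^ 2)⁻¹ * (f ⬝ᵥ K⁻¹.mulVec f) := by
  have hσ2 : (0:ℝ) < σ ^ 2 := by positivity
  set M : Matrix (Fin T) (Fin T) ℝ := K + σ ^ 2 • 1 with hMdef
  have hD : (σ ^ 2 • (1 : Matrix (Fin T) (Fin T) ℝ)).PosDef := by
    rw [smul_one_eq_diagonal]
    exact Matrix.PosDef.diagonal fun _ => hσ2
  have hM : M.PosDef := hK.add hD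
  have hKK : K * K⁻¹ = 1 := Matrix.mul_nonsing_inv K (isUnit_iff_ne_zero.mpr hK.det_pos.ne')
  have hKK' : K⁻¹ * K = 1 := Matrix.nonsing_inv_mul K (isUnit_iff_ne_zero.mpr hK.det_pos.ne')
  have hMM : M * M⁻¹ = 1 := Matrix.mul_nonsing_inv M (isUnit_iff_ne_zero.mpr hM.det_pos.ne')
  have hMM' : M⁻¹ * M = 1 := Matrix.nonsing_inv_mul M (isUnit_iff_ne_zero.mpr hM.det_pos.ne')
  set N : Matrix (Fin T) (Fin T) ℝ := (σ ^ 2)⁻¹ • K + 1 + σ ^ 2 • K⁻¹ with hNdef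
  have smulPD : ∀ (c : ℝ) (A : Matrix (Fin T) (Fin T) ℝ), 0 < c → A.PosDef →
      (c • A).PosDef := by
    intro c A hc hA
    refine Matrix.PosDef.of_dotProduct_mulVec_pos ?_ fun x hx => ?_
    · rw [Matrix.IsHermitian, Matrix.conjTranspose_smul, star_trivial, hA.1.eq]
    · rw [Matrix.smul_mulVec, dotProduct_smul, smul_eq_mul]
      exact mul_pos hc (hA.dotProduct_mulVec_pos hx)
  have hN : N.PosDef :=
    ((smulPD _ _ (by positivity) hK).add Matrix.PosDef.one).add
      (smulPD _ _ hσ2 hK.inv)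
  -- key matrix identity
  have hexp : M * K⁻¹ * M = K + (2 * σ ^ 2) • 1 + (σ ^ 2 * σ ^ 2) • K⁻¹ := by
    rw [hMdef]
    simp only [Matrix.add_mul, Matrix.mul_add, Matrix.smul_mul, Matrix.mul_smul, hKK, hKK',
      Matrix.one_mul, Matrix.mul_one, smul_smul]
    match_scalars <;> ring
  have key : M⁻¹ * N * M⁻¹ = (σ ^ 2)⁻¹ • K⁻¹ - M⁻¹ * M⁻¹ := by
    have hN' : N = (σ ^ 2)⁻¹ • (M * K⁻¹ * M) - 1 := by
      rw [hexp, hNdef]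
      match_scalars <;> field_simp <;> norm_num
    rw [hN', Matrix.mul_sub, Matrix.sub_mul, Matrix.mul_smul, Matrix.smul_mul,
      Matrix.mul_one]
    congr 1
    have : M⁻¹ * (M * K⁻¹ * M) * M⁻¹ = (M⁻¹ * M) * K⁻¹ * (M * M⁻¹) := by
      noncomm_ring
    rw [this, hMM', hMM, Matrix.one_mul, Matrix.mul_one]
  -- positivity of the conjugated matrix
  have hP : (M⁻¹ * N * M⁻¹).PosSemidef := by
    have hherm : (M⁻¹)ᴴ = M⁻¹ := hM.inv.isHermitian
    have := hN.posSemidef.mul_mul_conjTranspose_same M⁻¹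
    rwa [hherm] at this
  have hq : 0 ≤ f ⬝ᵥ (M⁻¹ * N * M⁻¹).mulVec f := by
    have := hP.dotProduct_mulVec_nonneg f
    simpa using this
  rw [key] at hq
  rw [Matrix.sub_mulVec, dotProduct_sub, Matrix.smul_mulVec, dotProduct_smul,
    smul_eq_mul] at hq
  have : f ⬝ᵥ ((M⁻¹) ^ 2).mulVec f = f ⬝ᵥ (M⁻¹ * M⁻¹).mulVec f := by rw [sq]
  rw [this]
  linarith
end

section
/- Let K be a T×T real symmetric positive definite matrix, f ∈ ℝ^T, σ > 0, and let ε_1, …, ε_T be independent real-valued random variables, each σ-sub-Gaussian. Then the random variable fᵀ (K + σ² I)^{−1} ε, where ε = (ε_1, …, ε_T), is η-sub-Gaussian with η = (fᵀ K^{−1} f)^{1/2}; that is, E[exp(ρ fᵀ (K + σ² I)^{−1} ε)] ≤ exp(ρ² (fᵀ K^{−1} f) / 2) for all ρ ∈ ℝ. -/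
open MeasureTheory Real Matrix ProbabilityTheory

lemma posDef_smul' {n : Type*} [Fintype n] {c : ℝ} (hc : 0 < c)
    {A : Matrix n n ℝ} (hA : A.PosDef) : (c • A).PosDef := by
  refine posDef_iff_dotProduct_mulVec.mpr ⟨?_, fun x hx => ?_⟩
  · unfold Matrix.IsHermitian
    rw [conjTranspose_smul, hA.1.eq]
    simp
  · rw [smul_mulVec, dotProduct_smul, smul_eq_mul]
    exact mul_pos hc (hA.dotProduct_mulVec_pos hx)

lemma posDef_one' {n : Type*} [Fintype n] [DecidableEq n] :
    (1 : Matrix n n ℝ).PosDef := by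
  refine posDef_iff_dotProduct_mulVec.mpr ⟨isHermitian_one, fun x hx => ?_⟩
  rw [one_mulVec]
  exact dotProduct_star_self_pos_iff.mpr hx

lemma key_quadratic {n : Type*} [Fintype n] [DecidableEq n]
    {K : Matrix n n ℝ} (hK : K.PosDef) {σ : ℝ} (hσ : 0 < σ) (f : n → ℝ) :
    σ ^ 2 * (((K + σ ^ 2 • 1)⁻¹ *ᵥ f) ⬝ᵥ ((K + σ ^ 2 • 1)⁻¹ *ᵥ f)) ≤ f ⬝ᵥ K⁻¹ *ᵥ f := by
  set M : Matrix n n ℝ := K + σ ^ 2 • 1 with hMdef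
  have hσ2 : (0:ℝ) < σ ^ 2 := by positivity
  have hone : (σ ^ 2 • 1 : Matrix n n ℝ).PosDef := posDef_smul' hσ2 posDef_one'
  have hM : M.PosDef := hK.add hone
  have hKdet : IsUnit K.det := (Matrix.isUnit_iff_isUnit_det K).mp hK.isUnit
  have hMdet : IsUnit M.det := (Matrix.isUnit_iff_isUnit_det M).mp hM.isUnit
  have hKK : K * K⁻¹ = 1 := Matrix.mul_nonsing_inv _ hKdet
  have hKK' : K⁻¹ * K = 1 := Matrix.nonsing_inv_mul _ hKdet
  have hMM : M * M⁻¹ = 1 := Matrix.mul_nonsing_inv _ hMdet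
  have hMM' : M⁻¹ * M = 1 := Matrix.nonsing_inv_mul _ hMdet
  set N : Matrix n n ℝ := K + σ ^ 2 • 1 + (σ ^ 2 * σ ^ 2) • K⁻¹ with hNdef
  have hN : N.PosDef := (hK.add hone).add (posDef_smul' (by positivity) hK.inv)
  have h1 : M * K⁻¹ = 1 + σ ^ 2 • K⁻¹ := by
    rw [hMdef, Matrix.add_mul, hKK, Matrix.smul_mul, Matrix.one_mul]
  have h2 : K⁻¹ * M = 1 + σ ^ 2 • K⁻¹ := by
    rw [hMdef, Matrix.mul_add, hKK', Matrix.mul_smul, Matrix.mul_one]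
  have key : M * K⁻¹ * M = N + σ ^ 2 • 1 := by
    rw [Matrix.mul_assoc, h2, Matrix.mul_add, Matrix.mul_one, Matrix.mul_smul, h1,
      hMdef, hNdef, smul_add, smul_smul]
    abel
  have h3 : M⁻¹ * (M * K⁻¹ * M) * M⁻¹ = K⁻¹ := by
    rw [Matrix.mul_assoc M K⁻¹ M, ← Matrix.mul_assoc M⁻¹ M (K⁻¹ * M), hMM', Matrix.one_mul,
      Matrix.mul_assoc, hMM, Matrix.mul_one]
  have h4 : M⁻¹ * (N + σ ^ 2 • 1) * M⁻¹ = M⁻¹ * N * M⁻¹ + σ ^ 2 • (M⁻¹ * M⁻¹) := by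
    rw [Matrix.mul_add, Matrix.add_mul, Matrix.mul_smul, Matrix.mul_one, Matrix.smul_mul]
  have h5 : K⁻¹ = M⁻¹ * N * M⁻¹ + σ ^ 2 • (M⁻¹ * M⁻¹) := by rw [← h3, key, h4]
  have hA : K⁻¹ - σ ^ 2 • (M⁻¹ * M⁻¹) = M⁻¹ * N * M⁻¹ := by rw [h5]; abel
  have hAsd : (M⁻¹ * N * M⁻¹).PosSemidef := by
    have hh : M⁻¹ᴴ = M⁻¹ := hM.1.inv.eq
    have := hN.posSemidef.conjTranspose_mul_mul_same M⁻¹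
    rwa [hh] at this
  have hnn := hAsd.dotProduct_mulVec_nonneg f
  rw [← hA, Matrix.sub_mulVec, dotProduct_sub, smul_mulVec, dotProduct_smul, smul_eq_mul,
    ← Matrix.mulVec_mulVec, star_trivial] at hnn
  have hdot : f ⬝ᵥ M⁻¹ *ᵥ (M⁻¹ *ᵥ f) = (M⁻¹ *ᵥ f) ⬝ᵥ (M⁻¹ *ᵥ f) := by
    rw [Matrix.dotProduct_mulVec f M⁻¹, ← Matrix.mulVec_transpose]
    congr 1
    have hh : M⁻¹ᴴ = M⁻¹ := hM.1.inv.eq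
    rw [show M⁻¹ᵀ = M⁻¹ from by simpa using hh]
  rw [hdot] at hnn
  linarith

/-- For symmetric positive definite `K`, `f ∈ ℝ^T`, `σ > 0`, and independent
`σ`-sub-Gaussian `ε_1, …, ε_T`, the random variable `fᵀ (K + σ²I)⁻¹ ε` is
`(fᵀ K⁻¹ f)^{1/2}`-sub-Gaussian. -/
theorem subGaussian_quadratic_smoothed
    {Ω : Type*} [MeasurableSpace Ω] (P : Measure Ω) [IsProbabilityMeasure P]
    (T : ℕ) (K : Matrix (Fin T) (Fin T) ℝ) (hK : K.PosDef)
    (f : Fin T → ℝ) (σ : ℝ) (hσ : 0 < σ)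
    (ε : Fin T → Ω → ℝ) (hmeas : ∀ t, Measurable (ε t))
    (hindep : iIndepFun ε P)
    (hsub : ∀ t, ∀ ρ : ℝ, ∫ ω, Real.exp (ρ * ε t ω) ∂P ≤ Real.exp (ρ ^ 2 * σ ^ 2 / 2)) :
    ∀ ρ : ℝ, ∫ ω, Real.exp (ρ * (f ⬝ᵥ (K + σ ^ 2 • 1)⁻¹.mulVec (fun t => ε t ω))) ∂P ≤
      Real.exp (ρ ^ 2 * (f ⬝ᵥ K⁻¹.mulVec f) / 2) := by
  intro ρ
  set M : Matrix (Fin T) (Fin T) ℝ := K + σ ^ 2 • 1 with hMdef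
  have hσ2 : (0:ℝ) < σ ^ 2 := by positivity
  have hM : M.PosDef := hK.add (posDef_smul' hσ2 posDef_one')
  set c : Fin T → ℝ := M⁻¹ *ᵥ f with hcdef
  have hdot : ∀ v : Fin T → ℝ, f ⬝ᵥ M⁻¹ *ᵥ v = c ⬝ᵥ v := by
    intro v
    rw [Matrix.dotProduct_mulVec f M⁻¹, ← Matrix.mulVec_transpose]
    congr 1
    rw [show M⁻¹ᵀ = M⁻¹ from by simpa using hM.1.inv.eq]
  set X : Fin T → Ω → ℝ := fun i ω => c i * ε i ω with hXdef
  have hXmeas : ∀ i, Measurable (X i) := fun i => (hmeas i).const_mul (c i)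
  have hXindep : iIndepFun X P := by
    have := hindep.comp (fun i (x : ℝ) => c i * x) (fun i => measurable_const_mul (c i))
    exact this
  have hrw : ∀ ω, f ⬝ᵥ M⁻¹ *ᵥ (fun t => ε t ω) = (∑ i, X i) ω := by
    intro ω
    rw [hdot]
    simp [dotProduct, X, Finset.sum_apply]
  have hLHS : ∫ ω, Real.exp (ρ * (f ⬝ᵥ M⁻¹ *ᵥ (fun t => ε t ω))) ∂P
      = mgf (∑ i, X i) P ρ := by
    unfold mgf
    exact integral_congr_ae (Filter.Eventually.of_forall fun ω => by dsimp only; rw [hrw ω])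
  rw [hLHS, hXindep.mgf_sum hXmeas Finset.univ]
  have hbound : ∀ i : Fin T, mgf (X i) P ρ ≤ Real.exp ((ρ * c i) ^ 2 * σ ^ 2 / 2) := by
    intro i
    have : mgf (X i) P ρ = ∫ ω, Real.exp ((ρ * c i) * ε i ω) ∂P := by
      unfold mgf
      exact integral_congr_ae (Filter.Eventually.of_forall fun ω => by
        simp [X, mul_assoc])
    rw [this]
    exact hsub i (ρ * c i)
  calc ∏ i, mgf (X i) P ρ ≤ ∏ i, Real.exp ((ρ * c i) ^ 2 * σ ^ 2 / 2) :=
        Finset.prod_le_prod (fun i _ => mgf_nonneg) (fun i _ => hbound i)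
    _ = Real.exp (∑ i, (ρ * c i) ^ 2 * σ ^ 2 / 2) := by rw [← Real.exp_sum]
    _ ≤ Real.exp (ρ ^ 2 * (f ⬝ᵥ K⁻¹ *ᵥ f) / 2) := by
        apply Real.exp_le_exp.mpr
        have hq := key_quadratic hK hσ f
        rw [← hMdef, ← hcdef] at hq
        have : ∑ i, (ρ * c i) ^ 2 * σ ^ 2 / 2 = ρ ^ 2 * (σ ^ 2 * (c ⬝ᵥ c)) / 2 := by
          rw [dotProduct, Finset.mul_sum, Finset.mul_sum, Finset.sum_div]
          congr 1
          ext i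
          ring
        rw [this]
        nlinarith [sq_nonneg ρ]
end

section
/- Let K be a T×T real symmetric positive semidefinite matrix, σ > 0, and set Λ = σ^{−2} I − (K + σ² I)^{−1}. Then: (i) Λ is symmetric positive semidefinite and every eigenvalue of Λ lies in the interval [0, σ^{−2}], so that the operator norm of Λ is at most σ^{−2}; (ii) tr(Λ) ≤ σ^{−2} log det(I + σ^{−2} K); (iii) tr(Λ²) ≤ σ^{−4} log det(I + σ^{−2} K). -/
open Matrix

/-- For `K` symmetric PSD and `σ > 0`, setting
`Λ = σ⁻² I − (K + σ² I)⁻¹`: (i) `Λ` is symmetric PSD with all eigenvalues in `[0, σ⁻²]`, so its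
operator norm is at most `σ⁻²` (expressed via the quadratic form);
(ii) `tr(Λ) ≤ σ⁻² log det(I + σ⁻² K)`; (iii) `tr(Λ²) ≤ σ⁻⁴ log det(I + σ⁻² K)`. -/
theorem lambda_matrix_bounds
    (T : ℕ) (K : Matrix (Fin T) (Fin T) ℝ) (hK : K.PosSemidef)
    (σ : ℝ) (hσ : 0 < σ) :
    let Λ : Matrix (Fin T) (Fin T) ℝ := (σ ^ 2)⁻¹ • 1 - (K + σ ^ 2 • 1)⁻¹
    Λ.PosSemidef ∧
      (∀ (t : ℝ) (v : Fin T → ℝ), v ≠ 0 → Λ.mulVec v = t • v → 0 ≤ t ∧ t ≤ (σ ^ 2)⁻¹) ∧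
      (∀ v : Fin T → ℝ, v ⬝ᵥ Λ.mulVec v ≤ (σ ^ 2)⁻¹ * (v ⬝ᵥ v)) ∧
      Λ.trace ≤ (σ ^ 2)⁻¹ * Real.log ((1 + (σ ^ 2)⁻¹ • K).det) ∧
      (Λ * Λ).trace ≤ ((σ ^ 2)⁻¹) ^ 2 * Real.log ((1 + (σ ^ 2)⁻¹ • K).det) := by
  intro Λ
  have hσ2 : (0:ℝ) < σ ^ 2 := by positivity
  set A : Matrix (Fin T) (Fin T) ℝ := K + σ ^ 2 • 1 with hAdef
  have hApd : A.PosDef := Matrix.PosDef.posSemidef_add hK (by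
    rw [smul_one_eq_diagonal]
    exact Matrix.posDef_diagonal_iff.mpr fun _ => hσ2)
  have hA : A.IsHermitian := hApd.isHermitian
  set μ : Fin T → ℝ := hA.eigenvalues with hμdef
  set U : Matrix (Fin T) (Fin T) ℝ := (hA.eigenvectorUnitary : Matrix (Fin T) (Fin T) ℝ) with hUdef
  have hU1 : star U * U = 1 := Unitary.coe_star_mul_self _
  have hU2 : U * star U = 1 := Unitary.coe_mul_star_self _
  have hspec : A = U * diagonal μ * star U := by
    have := hA.spectral_theorem
    simpa using this
  have hμpos : ∀ i, 0 < μ i := fun i => hApd.eigenvalues_pos i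
  have hμge : ∀ i, σ ^ 2 ≤ μ i := by
    intro i
    have hM : (star U * K * U).PosSemidef := by
      have := hK.conjTranspose_mul_mul_same U
      simpa [Matrix.star_eq_conjTranspose] using this
    have hKval : star U * K * U = diagonal μ - σ ^ 2 • 1 := by
      have h1 : star U * A * U = diagonal μ := by
        calc star U * A * U = star U * (U * diagonal μ * star U) * U := by rw [← hspec]
          _ = (star U * U) * diagonal μ * (star U * U) := by noncomm_ring
          _ = diagonal μ := by rw [hU1]; simp
      have h2 : star U * A * U = star U * K * U + σ ^ 2 • (star U * U) := by
        rw [hAdef]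
        noncomm_ring
      rw [h1, hU1] at h2
      rw [eq_sub_iff_add_eq, ← h2]
    have hnn : 0 ≤ (star U * K * U) i i := by
      have := hM.dotProduct_mulVec_nonneg (Pi.single i 1)
      simpa [Matrix.mulVec_single, single_dotProduct] using this
    rw [hKval] at hnn
    simp only [Matrix.sub_apply, Matrix.smul_apply, Matrix.diagonal_apply_eq,
      Matrix.one_apply_eq, smul_eq_mul, mul_one, sub_nonneg] at hnn
    exact hnn
  have hμne : ∀ i, μ i ≠ 0 := fun i => (hμpos i).ne'
  have hAinv : A⁻¹ = U * diagonal (fun i => (μ i)⁻¹) * star U := by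
    apply Matrix.inv_eq_right_inv
    calc A * (U * diagonal (fun i => (μ i)⁻¹) * star U)
        = U * (diagonal μ * (star U * U) * diagonal (fun i => (μ i)⁻¹)) * star U := by
          rw [hspec]; noncomm_ring
      _ = 1 := by
          rw [hU1, Matrix.mul_one, Matrix.diagonal_mul_diagonal]
          have h : (fun i => μ i * (μ i)⁻¹) = fun _ => (1:ℝ) :=
            funext fun i => mul_inv_cancel₀ (hμne i)
          rw [h, Matrix.diagonal_one, Matrix.mul_one, hU2]
  set lam : Fin T → ℝ := fun i => (σ ^ 2)⁻¹ - (μ i)⁻¹ with hlamdef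
  have hlamnn : ∀ i, 0 ≤ lam i := by
    intro i
    have : (μ i)⁻¹ ≤ (σ ^ 2)⁻¹ := by
      exact inv_anti₀ hσ2 (hμge i)
    simpa [hlamdef, sub_nonneg] using this
  have hlamle : ∀ i, lam i ≤ (σ ^ 2)⁻¹ := by
    intro i
    have : 0 ≤ (μ i)⁻¹ := inv_nonneg.mpr (hμpos i).le
    simp only [hlamdef]
    linarith
  have hΛ : Λ = U * diagonal lam * star U := by
    show (σ ^ 2)⁻¹ • 1 - A⁻¹ = _
    have h1 : ((σ ^ 2)⁻¹ • 1 : Matrix (Fin T) (Fin T) ℝ)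
        = U * ((σ ^ 2)⁻¹ • 1) * star U := by
      rw [mul_smul_comm, Matrix.mul_one, Matrix.smul_mul, hU2]
    rw [h1, hAinv, ← Matrix.sub_mul, ← Matrix.mul_sub, smul_one_eq_diagonal,
      Matrix.diagonal_sub]
  have hΛpsd : Λ.PosSemidef := by
    rw [hΛ]
    have h := (Matrix.PosSemidef.diagonal (fun i => hlamnn i)).mul_mul_conjTranspose_same U
    simpa [Matrix.star_eq_conjTranspose] using h
  have hquad : ∀ v : Fin T → ℝ, v ⬝ᵥ Λ.mulVec v ≤ (σ ^ 2)⁻¹ * (v ⬝ᵥ v) := by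
    intro v
    have hinvpsd : (A⁻¹).PosSemidef := hApd.inv.posSemidef
    have h0 : 0 ≤ v ⬝ᵥ (A⁻¹).mulVec v := by simpa using hinvpsd.dotProduct_mulVec_nonneg v
    have h1 : v ⬝ᵥ Λ.mulVec v = (σ ^ 2)⁻¹ * (v ⬝ᵥ v) - v ⬝ᵥ (A⁻¹).mulVec v := by
      show v ⬝ᵥ (((σ ^ 2)⁻¹ • 1 - A⁻¹).mulVec v) = _
      rw [Matrix.sub_mulVec, dotProduct_sub, Matrix.smul_mulVec, Matrix.one_mulVec,
        dotProduct_smul, smul_eq_mul]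
    linarith
  have heig : ∀ (t : ℝ) (v : Fin T → ℝ), v ≠ 0 → Λ.mulVec v = t • v →
      0 ≤ t ∧ t ≤ (σ ^ 2)⁻¹ := by
    intro t v hv hev
    have hvv : 0 < v ⬝ᵥ v := by
      have h0 : 0 ≤ v ⬝ᵥ v := Finset.sum_nonneg fun i _ => mul_self_nonneg _
      exact lt_of_le_of_ne h0 fun h => hv (dotProduct_self_eq_zero.mp h.symm)
    have h1 : v ⬝ᵥ Λ.mulVec v = t * (v ⬝ᵥ v) := by rw [hev, dotProduct_smul, smul_eq_mul]
    have h2 : 0 ≤ t * (v ⬝ᵥ v) := by rw [← h1]; simpa using hΛpsd.dotProduct_mulVec_nonneg v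
    have h3 := hquad v
    rw [h1] at h3
    constructor
    · nlinarith
    · nlinarith
  have htr : Λ.trace = ∑ i, lam i := by
    rw [hΛ, Matrix.trace_mul_cycle, hU1, Matrix.one_mul, Matrix.trace_diagonal]
  have hΛΛ : Λ * Λ = U * diagonal (fun i => lam i * lam i) * star U := by
    rw [hΛ]
    calc U * diagonal lam * star U * (U * diagonal lam * star U)
        = U * (diagonal lam * (star U * U) * diagonal lam) * star U := by noncomm_ring
      _ = U * diagonal (fun i => lam i * lam i) * star U := by
          rw [hU1, Matrix.mul_one, Matrix.diagonal_mul_diagonal]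
  have htr2 : (Λ * Λ).trace = ∑ i, lam i * lam i := by
    rw [hΛΛ, Matrix.trace_mul_cycle, hU1, Matrix.one_mul, Matrix.trace_diagonal]
  have hdet : (1 + (σ ^ 2)⁻¹ • K).det = ∏ i, (σ ^ 2)⁻¹ * μ i := by
    have h0 : (1 : Matrix (Fin T) (Fin T) ℝ) + (σ ^ 2)⁻¹ • K = (σ ^ 2)⁻¹ • A := by
      rw [hAdef, smul_add, smul_smul, inv_mul_cancel₀ hσ2.ne', one_smul, add_comm]
    rw [h0, Matrix.det_smul]
    have h1 : A.det = ∏ i, μ i := by simpa using hA.det_eq_prod_eigenvalues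
    rw [h1, Finset.prod_mul_distrib, Finset.prod_const]
    simp
  have hlog : Real.log ((1 + (σ ^ 2)⁻¹ • K).det) = ∑ i, Real.log ((σ ^ 2)⁻¹ * μ i) := by
    rw [hdet, Real.log_prod]
    intro i _
    have := hμpos i
    positivity
  have hkey : ∀ i, lam i ≤ (σ ^ 2)⁻¹ * Real.log ((σ ^ 2)⁻¹ * μ i) := by
    intro i
    have hy : (0:ℝ) < (σ ^ 2)⁻¹ * μ i := by have := hμpos i; positivity
    have h1 : 1 - ((σ ^ 2)⁻¹ * μ i)⁻¹ ≤ Real.log ((σ ^ 2)⁻¹ * μ i) :=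
      Real.one_sub_inv_le_log_of_pos hy
    have h2 : lam i = (σ ^ 2)⁻¹ * (1 - ((σ ^ 2)⁻¹ * μ i)⁻¹) := by
      simp only [hlamdef]
      field_simp
    rw [h2]
    exact mul_le_mul_of_nonneg_left h1 (by positivity)
  refine ⟨hΛpsd, heig, hquad, ?_, ?_⟩
  · rw [htr, hlog, Finset.mul_sum]
    exact Finset.sum_le_sum fun i _ => hkey i
  · rw [htr2, hlog, Finset.mul_sum]
    refine Finset.sum_le_sum fun i _ => ?_
    calc lam i * lam i ≤ (σ ^ 2)⁻¹ * lam i :=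
          mul_le_mul_of_nonneg_right (hlamle i) (hlamnn i)
      _ ≤ (σ ^ 2)⁻¹ * ((σ ^ 2)⁻¹ * Real.log ((σ ^ 2)⁻¹ * μ i)) :=
          mul_le_mul_of_nonneg_left (hkey i) (by positivity)
      _ = ((σ ^ 2)⁻¹) ^ 2 * Real.log ((σ ^ 2)⁻¹ * μ i) := by ring
end

section
/- Let K be a T×T real symmetric positive semidefinite matrix and σ > 0. For 1 ≤ t ≤ T, define the posterior variance s_t² = K_{t,t} − k_tᵀ (K_{t−1} + σ² I)^{−1} k_t. Then det(K + σ² I) = Π_{t=1}^T (σ² + s_t²); equivalently, (1/2) log det(I + σ^{−2} K) = (1/2) Σ_{t=1}^T log(1 + σ^{−2} s_t²). -/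
open Matrix

private lemma smul_one_posDef {n : ℕ} {σ : ℝ} (hσ : 0 < σ) :
    (σ ^ 2 • (1 : Matrix (Fin n) (Fin n) ℝ)).PosDef := by
  rw [smul_one_eq_diagonal]
  exact posDef_diagonal_iff.mpr fun _ => by positivity

private lemma det_succ_schur {n : ℕ} (N : Matrix (Fin (n+1)) (Fin (n+1)) ℝ)
    (hA : (N.submatrix Fin.castSucc Fin.castSucc).PosDef) :
    N.det = (N.submatrix Fin.castSucc Fin.castSucc).det *
      (N (Fin.last n) (Fin.last n) -
        (fun i => N (Fin.last n) (Fin.castSucc i)) ⬝ᵥ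
          (N.submatrix Fin.castSucc Fin.castSucc)⁻¹.mulVec
            (fun j => N (Fin.castSucc j) (Fin.last n))) := by
  set A := N.submatrix Fin.castSucc Fin.castSucc with hAdef
  set B : Matrix (Fin n) (Fin 1) ℝ := Matrix.of fun i _ => N (Fin.castSucc i) (Fin.last n) with hB
  set C : Matrix (Fin 1) (Fin n) ℝ := Matrix.of fun _ j => N (Fin.last n) (Fin.castSucc j) with hC
  set D : Matrix (Fin 1) (Fin 1) ℝ := Matrix.of fun _ _ => N (Fin.last n) (Fin.last n) with hD
  have hblocks : N.submatrix finSumFinEquiv finSumFinEquiv = fromBlocks A B C D := by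
    ext i j
    have hlast : Fin.natAdd n (0 : Fin 1) = Fin.last n := by ext; simp
    cases i <;> cases j <;>
      simp [hAdef, hB, hC, hD, fromBlocks, Fin.castAdd, Fin.castSucc, hlast,
        Fin.fin_one_eq_zero, Matrix.submatrix_apply]
  haveI : Invertible A := hA.isUnit.invertible
  have h1 : N.det = (fromBlocks A B C D).det := by
    rw [← hblocks, det_submatrix_equiv_self]
  rw [h1, det_fromBlocks₁₁, invOf_eq_nonsing_inv]
  congr 1
  rw [det_fin_one]
  simp only [Matrix.sub_apply, hD, of_apply]
  congr 1
  simp only [Matrix.mul_assoc, mul_apply, mulVec, dotProduct, hB, hC, of_apply]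
  simp_rw [Finset.sum_mul, Finset.mul_sum]
  rw [Finset.sum_comm]
  apply Finset.sum_congr rfl
  intro i _
  apply Finset.sum_congr rfl
  intro j _
  ring

/-- The posterior variance. -/
noncomputable def sSqAux (T : ℕ) (K : Matrix (Fin T) (Fin T) ℝ) (σ : ℝ) : Fin T → ℝ :=
  fun t => K t t - (fun i => K (Fin.castLE t.isLt.le i) t) ⬝ᵥ
    ((Matrix.of fun i j => K (Fin.castLE t.isLt.le i) (Fin.castLE t.isLt.le j))
      + σ ^ 2 • 1)⁻¹.mulVec (fun i => K (Fin.castLE t.isLt.le i) t)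

section Aux

variable {T : ℕ} {K : Matrix (Fin T) (Fin T) ℝ} (hK : K.PosSemidef) {σ : ℝ} (hσ : 0 < σ)

private lemma lead_split {m : ℕ} (h : m ≤ T) :
    (K + σ ^ 2 • 1).submatrix (Fin.castLE h) (Fin.castLE h)
      = K.submatrix (Fin.castLE h) (Fin.castLE h) + σ ^ 2 • 1 := by
  ext i j
  simp [Matrix.submatrix_apply, Matrix.add_apply, Matrix.smul_apply, Matrix.one_apply,
    (Fin.castLE_injective h).eq_iff]

include hK hσ in
private lemma lead_posDef {m : ℕ} (h : m ≤ T) :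
    ((K + σ ^ 2 • 1).submatrix (Fin.castLE h) (Fin.castLE h)).PosDef := by
  rw [lead_split h]
  exact Matrix.PosDef.posSemidef_add (hK.submatrix _) (smul_one_posDef hσ)

include hK hσ in
private lemma key {n : ℕ} (h : n + 1 ≤ T) :
    ((K + σ ^ 2 • 1).submatrix (Fin.castLE h) (Fin.castLE h)).det =
      ((K + σ ^ 2 • 1).submatrix (Fin.castLE (Nat.le_of_succ_le h))
        (Fin.castLE (Nat.le_of_succ_le h))).det * (σ ^ 2 + sSqAux T K σ ⟨n, h⟩) := by
  set h' := Nat.le_of_succ_le h with hh'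
  set t : Fin T := ⟨n, h⟩ with htdef
  set N := (K + σ ^ 2 • 1).submatrix (Fin.castLE h) (Fin.castLE h) with hN
  have hcomp : (Fin.castLE h) ∘ (Fin.castSucc) = (Fin.castLE h' : Fin n → Fin T) := by
    funext i; ext; simp
  have hNA : N.submatrix Fin.castSucc Fin.castSucc
      = (K + σ ^ 2 • 1).submatrix (Fin.castLE h') (Fin.castLE h') := by
    rw [hN, Matrix.submatrix_submatrix, hcomp]
  have hApd : (N.submatrix Fin.castSucc Fin.castSucc).PosDef := by
    rw [hNA]; exact lead_posDef hK hσ h'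
  have hlt : Fin.castLE h (Fin.last n) = t := by ext; simp [htdef]
  have hne : ∀ i : Fin n, t ≠ Fin.castLE h' i := by
    intro i hcontra
    have : (t : ℕ) = i := congrArg Fin.val hcontra
    simp [htdef] at this
    omega
  have hNtt : N (Fin.last n) (Fin.last n) = K t t + σ ^ 2 := by
    simp [hN, Matrix.submatrix_apply, hlt, Matrix.add_apply, Matrix.smul_apply,
      Matrix.one_apply_eq]
  have hc : (fun i => N (Fin.last n) (Fin.castSucc i)) = fun i => K (Fin.castLE h' i) t := by
    funext i
    have h1 : Fin.castLE h (Fin.castSucc i) = Fin.castLE h' i := by ext; simp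
    have h2 : K t (Fin.castLE h' i) = K (Fin.castLE h' i) t := by
      have := hK.isHermitian.apply t (Fin.castLE h' i)
      simpa using this.symm
    simp [hN, Matrix.submatrix_apply, hlt, h1, Matrix.add_apply, Matrix.smul_apply,
      Matrix.one_apply_ne (hne i), h2]
  have hb : (fun j => N (Fin.castSucc j) (Fin.last n)) = fun j => K (Fin.castLE h' j) t := by
    funext j
    have h1 : Fin.castLE h (Fin.castSucc j) = Fin.castLE h' j := by ext; simp
    have hne' : Fin.castLE h' j ≠ t := fun hcontra => hne j hcontra.symm
    simp [hN, Matrix.submatrix_apply, hlt, h1, Matrix.add_apply, Matrix.smul_apply,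
      Matrix.one_apply_ne hne']
  have hXY : ((K + σ ^ 2 • 1).submatrix (Fin.castLE h') (Fin.castLE h') : Matrix (Fin n) (Fin n) ℝ)
      = (Matrix.of fun i j => K (Fin.castLE t.isLt.le i) (Fin.castLE t.isLt.le j))
        + σ ^ 2 • 1 := by
    rw [lead_split h']; rfl
  rw [det_succ_schur N hApd, hNA]
  congr 1
  rw [hNtt, hc, hb, hXY]
  show K t t + σ ^ 2 - _ = σ ^ 2 + (K t t - _)
  ring_nf
  rfl

include hK hσ in
private lemma lead_det {m : ℕ} (h : m ≤ T) :
    ((K + σ ^ 2 • 1).submatrix (Fin.castLE h) (Fin.castLE h)).det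
      = ∏ i : Fin m, (σ ^ 2 + sSqAux T K σ (Fin.castLE h i)) := by
  induction m with
  | zero => simp [Matrix.det_fin_zero]
  | succ n ih =>
    have hl : Fin.castLE h (Fin.last n) = (⟨n, h⟩ : Fin T) := by ext; simp
    rw [key hK hσ h, ih (Nat.le_of_succ_le h), Fin.prod_univ_castSucc, hl]
    rfl

include hK hσ in
private lemma factor_pos (t : Fin T) : 0 < σ ^ 2 + sSqAux T K σ t := by
  have hk := key hK hσ (h := t.isLt)
  have h1 : (0:ℝ) < ((K + σ ^ 2 • 1).submatrix (Fin.castLE t.isLt)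
      (Fin.castLE t.isLt)).det := (lead_posDef hK hσ t.isLt).det_pos
  have h2 : (0:ℝ) < ((K + σ ^ 2 • 1).submatrix (Fin.castLE (Nat.le_of_succ_le t.isLt))
      (Fin.castLE (Nat.le_of_succ_le t.isLt))).det :=
    (lead_posDef hK hσ (Nat.le_of_succ_le t.isLt)).det_pos
  have ht : (⟨t.val, t.isLt⟩ : Fin T) = t := rfl
  rw [ht] at hk
  nlinarith

end Aux

/-- For `K` symmetric PSD and `σ > 0`, with posterior variances
`s_t² = K_{t,t} − k_tᵀ (K_{t−1} + σ²I)⁻¹ k_t` (where `K_{t−1}` is the leading principal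
submatrix and `k_t` the corresponding column segment),
`det(K + σ²I) = Π_t (σ² + s_t²)`; equivalently
`(1/2) log det(I + σ⁻²K) = (1/2) Σ_t log(1 + σ⁻² s_t²)`. -/
theorem det_eq_prod_posterior_variances
    (T : ℕ) (K : Matrix (Fin T) (Fin T) ℝ) (hK : K.PosSemidef)
    (σ : ℝ) (hσ : 0 < σ) :
    let sub : (t : Fin T) → Matrix (Fin t.val) (Fin t.val) ℝ :=
      fun t => Matrix.of fun i j => K (Fin.castLE t.isLt.le i) (Fin.castLE t.isLt.le j)
    let kvec : (t : Fin T) → (Fin t.val → ℝ) :=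
      fun t i => K (Fin.castLE t.isLt.le i) t
    let sSq : Fin T → ℝ :=
      fun t => K t t - kvec t ⬝ᵥ (sub t + σ ^ 2 • 1)⁻¹.mulVec (kvec t)
    (K + σ ^ 2 • 1).det = ∏ t, (σ ^ 2 + sSq t) ∧
      (1 / 2) * Real.log ((1 + (σ ^ 2)⁻¹ • K).det) =
        (1 / 2) * ∑ t, Real.log (1 + (σ ^ 2)⁻¹ * sSq t) := by
  intro sub kvec sSq
  have hsSq : sSq = sSqAux T K σ := rfl
  have hσ2 : (σ:ℝ) ^ 2 ≠ 0 := by positivity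
  have hdet : (K + σ ^ 2 • 1).det = ∏ t, (σ ^ 2 + sSq t) := by
    have h := lead_det hK hσ (le_refl T)
    have hid : (Fin.castLE (le_refl T)) = (id : Fin T → Fin T) := by
      funext i; ext; simp
    rw [hid, Matrix.submatrix_id_id] at h
    rw [hsSq]
    simpa using h
  refine ⟨hdet, ?_⟩
  have hfac : ∀ t : Fin T, 0 < σ ^ 2 + sSq t := by
    rw [hsSq]; exact factor_pos hK hσ
  have hsplit : K + σ ^ 2 • 1 = σ ^ 2 • (1 + (σ ^ 2)⁻¹ • K) := by
    rw [smul_add, smul_smul, mul_inv_cancel₀ hσ2, one_smul, add_comm]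
  have hdet2 : (1 + (σ ^ 2)⁻¹ • K).det = ∏ t, (1 + (σ ^ 2)⁻¹ * sSq t) := by
    have h1 : (σ ^ 2) ^ T * (1 + (σ ^ 2)⁻¹ • K).det = ∏ t, (σ ^ 2 + sSq t) := by
      rw [← hdet, hsplit, Matrix.det_smul, Fintype.card_fin]
    have h2 : ∏ t, ((1 + (σ ^ 2)⁻¹ * sSq t) * σ ^ 2) = ∏ t, (σ ^ 2 + sSq t) :=
      Finset.prod_congr rfl (fun t _ => by field_simp)
    have h2' : (∏ t, (1 + (σ ^ 2)⁻¹ * sSq t)) * (σ ^ 2) ^ T = ∏ t, (σ ^ 2 + sSq t) := by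
      rw [← h2, Finset.prod_mul_distrib, Finset.prod_const, Finset.card_univ, Fintype.card_fin]
    have hpow : ((σ:ℝ) ^ 2) ^ T ≠ 0 := by positivity
    have hmm : (σ ^ 2) ^ T * (1 + (σ ^ 2)⁻¹ • K).det
        = (σ ^ 2) ^ T * ∏ t, (1 + (σ ^ 2)⁻¹ * sSq t) := by
      rw [h1, ← h2', mul_comm]
    exact mul_left_cancel₀ hpow hmm
  rw [hdet2, Real.log_prod]
  intro t _
  have := hfac t
  have : 0 < 1 + (σ ^ 2)⁻¹ * sSq t := by
    have h3 : 1 + (σ ^ 2)⁻¹ * sSq t = (σ ^ 2)⁻¹ * (σ ^ 2 + sSq t) := by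
      field_simp
    rw [h3]
    positivity
  linarith
end

section
/- Let d ≥ 1, σ > 0, let X ⊆ ℝ^d, let θ, θ' ∈ ℝ^d satisfy 0 < θ'_i ≤ θ_i for all i, and for positive lengthscales θ define the squared-exponential kernel k_θ(x, y) = exp(−(1/2) Σ_{i=1}^d (x_i − y_i)² / θ_i²). For T ≥ 1 define the maximum information gain γ_T^θ = sup over all subsets A ⊆ X of cardinality T of (1/2) log det(I + σ^{−2} K_A^θ), where K_A^θ is the T×T Gram matrix (k_θ(a, a'))_{a, a' ∈ A}. Then γ_T^θ ≤ γ_T^{θ'}. -/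
open Matrix

set_option linter.unusedSectionVars false
set_option linter.unusedVariables false
set_option maxHeartbeats 1000000

namespace SEAux
variable {n : Type*} [Fintype n] [DecidableEq n]

lemma form_eq (M : Matrix n n ℝ) (x : n → ℝ) :
    star x ⬝ᵥ M *ᵥ x = ∑ i, ∑ j, x i * M i j * x j := by
  simp [dotProduct, mulVec, Finset.mul_sum, mul_assoc]

lemma herm_apply' {M : Matrix n n ℝ} (h : M.IsHermitian) (i j : n) : M i j = M j i := by
  conv_lhs => rw [← h]
  simp [conjTranspose_apply]

lemma isHermitian_of_symm {M : Matrix n n ℝ} (h : ∀ i j, M i j = M j i) : M.IsHermitian := by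
  ext i j
  simp [conjTranspose_apply, h i j]

lemma psd_of_form {M : Matrix n n ℝ} (hsymm : ∀ i j, M i j = M j i)
    (h : ∀ x : n → ℝ, 0 ≤ ∑ i, ∑ j, x i * M i j * x j) : M.PosSemidef :=
  PosSemidef.of_dotProduct_mulVec_nonneg (isHermitian_of_symm hsymm) fun x => by rw [form_eq]; exact h x

open scoped MatrixOrder in
lemma psd_hadamard {A B : Matrix n n ℝ} (hA : A.PosSemidef) (hB : B.PosSemidef) :
    (A ⊙ B).PosSemidef := by
  obtain ⟨C, hC⟩ : ∃ C : Matrix n n ℝ, B = Cᴴ * C := by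
    obtain ⟨C, hC⟩ := CStarAlgebra.nonneg_iff_eq_star_mul_self.mp hB.nonneg
    exact ⟨C, hC⟩
  refine psd_of_form (fun i j => by
    rw [hadamard_apply, hadamard_apply, herm_apply' hA.1 i j, herm_apply' hB.1 i j]) (fun x => ?_)
  have key : ∀ i j, x i * (A ⊙ B) i j * x j
      = ∑ k, (C k i * x i) * A i j * (C k j * x j) := by
    intro i j
    rw [hadamard_apply, hC]
    simp only [Matrix.mul_apply, conjTranspose_apply, star_trivial, Finset.mul_sum,
      Finset.sum_mul]
    exact Finset.sum_congr rfl fun k _ => by ring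
  calc (0:ℝ) ≤ ∑ k, ∑ i, ∑ j, (C k i * x i) * A i j * (C k j * x j) := by
        refine Finset.sum_nonneg fun k _ => ?_
        have := hA.dotProduct_mulVec_nonneg (fun i => C k i * x i)
        rwa [form_eq] at this
    _ = ∑ i, ∑ j, x i * (A ⊙ B) i j * x j := by
        simp only [key]
        rw [Finset.sum_comm]
        exact Finset.sum_congr rfl fun i _ => Finset.sum_comm


lemma psd_smul {A : Matrix n n ℝ} (hA : A.PosSemidef) {c : ℝ} (hc : 0 ≤ c) :
    (c • A).PosSemidef := by
  refine psd_of_form (fun i j => by simp [herm_apply' hA.1 i j]) (fun x => ?_)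
  have := hA.dotProduct_mulVec_nonneg x
  rw [form_eq] at this
  calc (0:ℝ) ≤ c * ∑ i, ∑ j, x i * A i j * x j := mul_nonneg hc this
    _ = ∑ i, ∑ j, x i * (c • A) i j * x j := by
        simp only [Finset.mul_sum, Matrix.smul_apply, smul_eq_mul]
        exact Finset.sum_congr rfl fun i _ => Finset.sum_congr rfl fun j _ => by ring

lemma psd_ones : (Matrix.of fun _ _ : n => (1:ℝ)).PosSemidef := by
  refine psd_of_form (fun i j => rfl) (fun x => ?_)
  have : ∑ i, ∑ j, x i * (Matrix.of fun _ _ : n => (1:ℝ)) i j * x j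
      = (∑ i, x i) * (∑ j, x j) := by
    rw [Finset.sum_mul]
    exact Finset.sum_congr rfl fun i _ => by
      rw [Finset.mul_sum]
      exact Finset.sum_congr rfl fun j _ => by simp [Matrix.of_apply]
  rw [this]
  exact mul_self_nonneg _

lemma psd_map_pow {A : Matrix n n ℝ} (hA : A.PosSemidef) (p : ℕ) :
    (A.map (· ^ p)).PosSemidef := by
  induction p with
  | zero => simpa [Matrix.map] using (psd_ones (n := n))
  | succ p ih =>
      have : A.map (· ^ (p + 1)) = A ⊙ (A.map (· ^ p)) := by
        ext i j
        simp [Matrix.map_apply, hadamard_apply, pow_succ']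
      rw [this]
      exact psd_hadamard hA ih

lemma psd_map_exp {A : Matrix n n ℝ} (hA : A.PosSemidef) :
    (A.map Real.exp).PosSemidef := by
  have hexp : ∀ y : ℝ, Real.exp y = ∑' p : ℕ, y ^ p / p.factorial := by
    intro y
    rw [Real.exp_eq_exp_ℝ, NormedSpace.exp_eq_tsum_div]
  refine psd_of_form (fun i j => by simp [Matrix.map_apply, herm_apply' hA.1 i j]) (fun x => ?_)
  have key : ∀ i j, x i * (A.map Real.exp) i j * x j
      = ∑' p : ℕ, x i * x j * (A i j ^ p / p.factorial) := by
    intro i j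
    rw [Matrix.map_apply, hexp,
      show x i * (∑' p : ℕ, A i j ^ p / p.factorial) * x j
        = x i * x j * (∑' p : ℕ, A i j ^ p / p.factorial) by ring, ← tsum_mul_left]
  simp only [key]
  have hsummable : ∀ i j : n, Summable fun p : ℕ => x i * x j * (A i j ^ p / p.factorial) :=
    fun i j => (Real.summable_pow_div_factorial (A i j)).mul_left _
  rw [Finset.sum_congr rfl (fun i _ => (Summable.tsum_finsetSum (fun j _ => hsummable i j)).symm)]
  rw [(Summable.tsum_finsetSum (f := fun (i : n) (p : ℕ) => ∑ j, x i * x j * (A i j ^ p / p.factorial))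
    (fun i _ => summable_sum (fun j _ => hsummable i j))).symm]
  refine tsum_nonneg fun p => ?_
  have hp := (psd_map_pow hA p).dotProduct_mulVec_nonneg x
  rw [form_eq] at hp
  calc (0:ℝ) ≤ ((p.factorial : ℝ))⁻¹ * ∑ i, ∑ j, x i * (A.map (· ^ p)) i j * x j :=
        mul_nonneg (by positivity) hp
    _ = ∑ i, ∑ j, x i * x j * (A i j ^ p / p.factorial) := by
        simp only [Finset.mul_sum, Matrix.map_apply]
        exact Finset.sum_congr rfl fun i _ => Finset.sum_congr rfl fun j _ => by
          ring


lemma psd_gram {d : ℕ} (w : Fin d → ℝ) (hw : ∀ l, 0 ≤ w l) (a : n → Fin d → ℝ) :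
    (Matrix.of fun i j => ∑ l, w l * (a i l * a j l)).PosSemidef := by
  refine psd_of_form (fun i j => by
    simp only [Matrix.of_apply]
    exact Finset.sum_congr rfl fun l _ => by ring) (fun x => ?_)
  have key : ∑ i, ∑ j, x i * (Matrix.of fun i j => ∑ l, w l * (a i l * a j l)) i j * x j
      = ∑ l, w l * (∑ i, x i * a i l) ^ 2 := by
    have h1 : ∀ (i j : n), x i * (∑ l, w l * (a i l * a j l)) * x j
        = ∑ l, w l * ((x i * a i l) * (x j * a j l)) := by
      intro i j
      rw [show x i * (∑ l, w l * (a i l * a j l)) * x j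
          = (∑ l, w l * (a i l * a j l)) * (x i * x j) by ring, Finset.sum_mul]
      exact Finset.sum_congr rfl fun l _ => by ring
    simp only [Matrix.of_apply, h1]
    calc ∑ i, ∑ j, ∑ l, w l * ((x i * a i l) * (x j * a j l))
        = ∑ i, ∑ l, ∑ j, w l * ((x i * a i l) * (x j * a j l)) :=
          Finset.sum_congr rfl fun i _ => Finset.sum_comm
      _ = ∑ l, ∑ i, ∑ j, w l * ((x i * a i l) * (x j * a j l)) := Finset.sum_comm
      _ = ∑ l, w l * (∑ i, x i * a i l) ^ 2 := ?_
    refine Finset.sum_congr rfl fun l _ => ?_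
    rw [sq, Finset.sum_mul_sum Finset.univ Finset.univ (fun i => x i * a i l)
      (fun j => x j * a j l), Finset.mul_sum]
    simp only [Finset.mul_sum]
  rw [key]
  exact Finset.sum_nonneg fun l _ => mul_nonneg (hw l) (sq_nonneg _)

/-- The Gram matrix of a (weighted, with nonnegative weights) squared-exponential kernel is
positive semidefinite. -/
lemma psd_se {d : ℕ} (w : Fin d → ℝ) (hw : ∀ l, 0 ≤ w l) (a : n → Fin d → ℝ) :
    (Matrix.of fun i j =>
      Real.exp (-(1 / 2) * ∑ l, w l * (a i l - a j l) ^ 2)).PosSemidef := by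
  set q : n → ℝ := fun i => Real.exp (-((1 : ℝ) / 2) * ∑ l, w l * a i l ^ 2) with hq
  set G : Matrix n n ℝ := Matrix.of fun i j => ∑ l, w l * (a i l * a j l) with hG
  have hE : (G.map Real.exp).PosSemidef := psd_map_exp (psd_gram w hw a)
  have hD : (Matrix.of fun i j =>
      Real.exp (-(1 / 2) * ∑ l, w l * (a i l - a j l) ^ 2))
      = Matrix.diagonal q * (G.map Real.exp) * (Matrix.diagonal q)ᴴ := by
    ext i j
    rw [diagonal_conjTranspose]
    have hstar : star q = q := by simp
    rw [hstar, mul_diagonal, diagonal_mul]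
    simp only [Matrix.of_apply, Matrix.map_apply, hq, hG, ← Real.exp_add]
    congr 1
    have hptwise : ∀ l : Fin d, -(1/2 : ℝ) * (w l * (a i l - a j l) ^ 2)
        = -(1/2) * (w l * a i l ^ 2) + (w l * (a i l * a j l) + -(1/2) * (w l * a j l ^ 2)) := by
      intro l; ring
    rw [Finset.mul_sum, Finset.sum_congr rfl fun l _ => hptwise l, Finset.sum_add_distrib,
      Finset.sum_add_distrib, ← Finset.mul_sum, ← Finset.mul_sum]
    ring
  rw [hD]
  exact hE.mul_mul_conjTranspose_same _


lemma det_nonneg_psd {M : Matrix n n ℝ} (hM : M.PosSemidef) : 0 ≤ M.det := by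
  rw [hM.1.det_eq_prod_eigenvalues]
  exact Finset.prod_nonneg fun i _ => by exact_mod_cast hM.eigenvalues_nonneg i

lemma det_one_add_psd {M : Matrix n n ℝ} (hM : M.PosSemidef) : 1 ≤ (1 + M).det := by
  have herm : (1 + M).IsHermitian := (isHermitian_one).add hM.1
  rw [herm.det_eq_prod_eigenvalues]
  have hev : ∀ i, (1 : ℝ) ≤ herm.eigenvalues i := by
    intro i
    set v : n → ℝ := ⇑(herm.eigenvectorBasis i) with hv
    have hv0 : v ≠ 0 := by
      have := herm.eigenvectorBasis.orthonormal.ne_zero i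
      intro h
      apply this
      ext j
      exact congrFun h j
    have hmv : (1 + M) *ᵥ v = herm.eigenvalues i • v := herm.mulVec_eigenvectorBasis i
    have hdot : v ⬝ᵥ ((1 + M) *ᵥ v) = herm.eigenvalues i * (v ⬝ᵥ v) := by
      rw [hmv, dotProduct_smul, smul_eq_mul]
    have hdot2 : v ⬝ᵥ ((1 + M) *ᵥ v) = v ⬝ᵥ v + v ⬝ᵥ (M *ᵥ v) := by
      rw [add_mulVec, dotProduct_add, one_mulVec]
    have hMv : 0 ≤ v ⬝ᵥ (M *ᵥ v) := by simpa using hM.dotProduct_mulVec_nonneg v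
    have hge : (0:ℝ) ≤ v ⬝ᵥ v := Finset.sum_nonneg fun j _ => mul_self_nonneg _
    have hvv : 0 < v ⬝ᵥ v := hge.lt_of_ne fun h => hv0 (dotProduct_self_eq_zero.mp h.symm)
    nlinarith [hdot, hdot2, hMv, hvv]
  simp only [RCLike.ofReal_real_eq_id, id_eq]
  calc (1:ℝ) = ∏ _i : n, 1 := Finset.prod_const_one.symm
    _ ≤ ∏ i, herm.eigenvalues i :=
        Finset.prod_le_prod (fun i _ => zero_le_one) (fun i _ => hev i)

lemma posDef_of_psd_det_ne_zero {M : Matrix n n ℝ} (hM : M.PosSemidef) (hd : M.det ≠ 0) :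
    M.PosDef := by
  refine PosDef.of_dotProduct_mulVec_pos hM.1 fun x hx =>
    lt_of_le_of_ne (hM.dotProduct_mulVec_nonneg x) fun h => hx ?_
  have hMv : M *ᵥ x = 0 := (hM.dotProduct_mulVec_zero_iff x).mp h.symm
  have h2 : M.mulVec x = M.mulVec 0 := by simpa using hMv
  letI := Matrix.invertibleOfIsUnitDet M (isUnit_iff_ne_zero.mpr hd)
  exact Matrix.mulVec_injective_of_invertible M h2

open scoped MatrixOrder in
/-- Monotonicity of the determinant with respect to the Loewner order on PSD matrices. -/
lemma det_mono_psd {P Q : Matrix n n ℝ} (hP : P.PosSemidef) (hQP : (Q - P).PosSemidef) :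
    P.det ≤ Q.det := by
  rcases eq_or_ne P.det 0 with h0 | h0
  · rw [h0]
    have : Q.PosSemidef := by simpa using hQP.add hP
    exact det_nonneg_psd this
  · set s := CFC.sqrt P with hs
    have hss : s * s = P := CFC.sqrt_mul_sqrt_self P hP.nonneg
    have hdets : s.det * s.det = P.det := by rw [← det_mul, hss]
    have hsd : s.det ≠ 0 := fun h => h0 (by rw [← hdets, h, zero_mul])
    letI := Matrix.invertibleOfIsUnitDet s (isUnit_iff_ne_zero.mpr hsd)
    have hsherm : s.IsHermitian := (CFC.sqrt_nonneg P).posSemidef.1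
    have hinvherm : (s⁻¹)ᴴ = s⁻¹ := by rw [conjTranspose_nonsing_inv, hsherm.eq]
    have hN : (s⁻¹ * (Q - P) * s⁻¹).PosSemidef := by
      have := hQP.mul_mul_conjTranspose_same (s⁻¹)
      rwa [hinvherm] at this
    have hQeq : Q = s * (1 + s⁻¹ * (Q - P) * s⁻¹) * s := by
      rw [mul_add, mul_one, add_mul]
      rw [show s * (s⁻¹ * (Q - P) * s⁻¹) * s = (s * s⁻¹) * (Q - P) * (s⁻¹ * s) by
        noncomm_ring]
      rw [Matrix.mul_inv_of_invertible, Matrix.inv_mul_of_invertible, one_mul, mul_one, hss]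
      abel
    calc P.det = s.det * 1 * s.det := by rw [mul_one, hdets]
      _ ≤ s.det * (1 + s⁻¹ * (Q - P) * s⁻¹).det * s.det := by
          have h1 : (1:ℝ) ≤ (1 + s⁻¹ * (Q - P) * s⁻¹).det := det_one_add_psd hN
          nlinarith [sq_nonneg s.det, hdets, det_nonneg_psd hP]
      _ = Q.det := by conv_rhs => rw [hQeq, det_mul, det_mul]


lemma diag_pos_of_posDef {M : Matrix n n ℝ} (hM : M.PosDef) (i : n) : 0 < M i i := by
  have hne : (Pi.single i 1 : n → ℝ) ≠ 0 := by
    intro h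
    have := congrFun h i
    simp at this
  have h := hM.dotProduct_mulVec_pos hne
  rw [form_eq] at h
  simpa [Pi.single_apply, Finset.mul_sum, mul_ite, ite_mul, Finset.sum_ite_eq,
    Finset.sum_ite_eq'] using h

lemma diag_nonneg_of_psd {M : Matrix n n ℝ} (hM : M.PosSemidef) (i : n) : 0 ≤ M i i := by
  have h := hM.dotProduct_mulVec_nonneg (Pi.single i 1)
  rw [form_eq] at h
  simpa [Pi.single_apply, Finset.mul_sum, mul_ite, ite_mul, Finset.sum_ite_eq,
    Finset.sum_ite_eq'] using h

/-- The Schur complement with respect to the top-left `1 × 1` block. -/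
noncomputable def schurAux {m : ℕ} (M : Matrix (Fin 1 ⊕ Fin m) (Fin 1 ⊕ Fin m) ℝ) :
    Matrix (Fin m) (Fin m) ℝ :=
  Matrix.of fun i j => M (.inr i) (.inr j)
    - M (.inr i) (.inl 0) * (M (.inl 0) (.inl 0))⁻¹ * M (.inl 0) (.inr j)

lemma toBlocks11_posDef {m : ℕ} {M : Matrix (Fin 1 ⊕ Fin m) (Fin 1 ⊕ Fin m) ℝ}
    (hc : 0 < M (.inl 0) (.inl 0)) : M.toBlocks₁₁.PosDef := by
  refine PosDef.of_dotProduct_mulVec_pos ?_ ?_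
  · ext i j
    have hi : i = 0 := Subsingleton.elim _ _
    have hj : j = 0 := Subsingleton.elim _ _
    subst hi; subst hj; rfl
  · intro x hx
    have hx0 : x 0 ≠ 0 := by
      intro h
      apply hx
      ext j
      have : j = 0 := Subsingleton.elim _ _
      rw [this, h, Pi.zero_apply]
    have : star x ⬝ᵥ (M.toBlocks₁₁ *ᵥ x) = x 0 * M (.inl 0) (.inl 0) * x 0 := by
      rw [form_eq]
      simp [Fin.sum_univ_one, Matrix.toBlocks₁₁]
    rw [this]
    nlinarith [mul_self_pos.mpr hx0, hc]

lemma inv_one_by_one (M : Matrix (Fin 1) (Fin 1) ℝ) (i j : Fin 1) : M⁻¹ i j = (M 0 0)⁻¹ := by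
  have hi : i = 0 := Subsingleton.elim _ _
  have hj : j = 0 := Subsingleton.elim _ _
  subst hi; subst hj
  rw [Matrix.inv_def, Matrix.adjugate_fin_one, Matrix.det_fin_one]
  simp

lemma det_block {m : ℕ} (M : Matrix (Fin 1 ⊕ Fin m) (Fin 1 ⊕ Fin m) ℝ)
    (hc : M (.inl 0) (.inl 0) ≠ 0) :
    M.det = M (.inl 0) (.inl 0) * (schurAux M).det := by
  have hdet11 : M.toBlocks₁₁.det = M (.inl 0) (.inl 0) := by
    rw [Matrix.det_fin_one]; rfl
  letI : Invertible M.toBlocks₁₁ :=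
    Matrix.invertibleOfIsUnitDet _ (by rw [hdet11]; exact isUnit_iff_ne_zero.mpr hc)
  conv_lhs => rw [← Matrix.fromBlocks_toBlocks M, Matrix.det_fromBlocks₁₁]
  rw [hdet11]
  congr 2
  ext i j
  rw [Matrix.sub_apply, Matrix.mul_apply]
  simp only [Fin.sum_univ_one, Matrix.mul_apply, invOf_eq_nonsing_inv, inv_one_by_one]
  simp only [Matrix.toBlocks₁₁, Matrix.toBlocks₁₂, Matrix.toBlocks₂₁, Matrix.toBlocks₂₂,
    schurAux, Matrix.of_apply]

lemma psd_schur {m : ℕ} {M : Matrix (Fin 1 ⊕ Fin m) (Fin 1 ⊕ Fin m) ℝ}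
    (hM : M.PosSemidef) (hc : 0 < M (.inl 0) (.inl 0)) : (schurAux M).PosSemidef := by
  have h11 : M.toBlocks₁₁.PosDef := toBlocks11_posDef hc
  letI : Invertible M.toBlocks₁₁ :=
    Matrix.invertibleOfIsUnitDet _ (isUnit_iff_ne_zero.mpr h11.det_pos.ne')
  have hconj : (M.toBlocks₁₂)ᴴ = M.toBlocks₂₁ := by
    ext i j
    rw [conjTranspose_apply, star_trivial]
    exact herm_apply' hM.1 (.inl j) (.inr i)
  have hM' : (fromBlocks M.toBlocks₁₁ M.toBlocks₁₂ (M.toBlocks₁₂)ᴴ M.toBlocks₂₂).PosSemidef := by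
    rw [hconj, Matrix.fromBlocks_toBlocks]
    exact hM
  have hschur := (Matrix.PosDef.fromBlocks₁₁ M.toBlocks₁₂ M.toBlocks₂₂ h11).mp hM'
  have heq : M.toBlocks₂₂ - (M.toBlocks₁₂)ᴴ * M.toBlocks₁₁⁻¹ * M.toBlocks₁₂ = schurAux M := by
    ext i j
    rw [Matrix.sub_apply, Matrix.mul_apply]
    simp only [Fin.sum_univ_one, Matrix.mul_apply, inv_one_by_one, conjTranspose_apply,
      star_trivial]
    simp only [Matrix.toBlocks₁₁, Matrix.toBlocks₁₂, Matrix.toBlocks₂₁, Matrix.toBlocks₂₂,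
      schurAux, Matrix.of_apply]
    rw [herm_apply' hM.1 (.inl 0) (.inr i)]
  rwa [heq] at hschur


lemma oppenheim_sum {m : ℕ}
    (ih : ∀ A B : Matrix (Fin m) (Fin m) ℝ, A.PosDef → B.PosSemidef →
      A.det * ∏ i, B i i ≤ (A ⊙ B).det)
    (A B : Matrix (Fin 1 ⊕ Fin m) (Fin 1 ⊕ Fin m) ℝ) (hA : A.PosDef) (hB : B.PosSemidef) :
    A.det * ∏ i, B i i ≤ (A ⊙ B).det := by
  have ha : 0 < A (.inl 0) (.inl 0) := diag_pos_of_posDef hA _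
  have hb0 : 0 ≤ B (.inl 0) (.inl 0) := diag_nonneg_of_psd hB _
  set a := A (.inl 0) (.inl 0) with ha_def
  set b := B (.inl 0) (.inl 0) with hb_def
  have hprodB : ∏ i, B i i = b * ∏ i : Fin m, B (.inr i) (.inr i) := by
    rw [Fintype.prod_sum_type]
    congr 1
    exact Fin.prod_univ_one _
  have hABpsd : (A ⊙ B).PosSemidef := psd_hadamard hA.posSemidef hB
  rcases eq_or_lt_of_le hb0 with hb | hb
  · rw [hprodB, ← hb, zero_mul, mul_zero]
    exact det_nonneg_psd hABpsd
  · -- notation for the pieces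
    set u : Fin m → ℝ := fun i => A (.inr i) (.inl 0) with hu
    set v : Fin m → ℝ := fun i => B (.inr i) (.inl 0) with hv
    have hab : 0 < a * b := mul_pos ha hb
    have hAB11 : (A ⊙ B) (.inl 0) (.inl 0) = a * b := rfl
    have hdetAB : (A ⊙ B).det = (a * b) * (schurAux (A ⊙ B)).det := by
      rw [det_block _ (by rw [hAB11]; exact hab.ne')]
      rw [hAB11]
    have hdetA : A.det = a * (schurAux A).det := det_block _ ha.ne'
    have hSApsd : (schurAux A).PosSemidef := psd_schur hA.posSemidef ha
    have hSA : (schurAux A).PosDef := by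
      refine posDef_of_psd_det_ne_zero hSApsd ?_
      intro h
      have := hA.det_pos
      rw [hdetA, h, mul_zero] at this
      exact lt_irrefl _ this
    have hSBpsd : (schurAux B).PosSemidef := psd_schur hB hb
    have hB22psd : (B.toBlocks₂₂).PosSemidef := hB.submatrix Sum.inr
    have hrank1 : (Matrix.of fun i j : Fin m => u i * u j).PosSemidef := by
      refine psd_of_form (fun i j => by simp [Matrix.of_apply]; ring) (fun x => ?_)
      have : ∑ i, ∑ j, x i * (Matrix.of fun i j : Fin m => u i * u j) i j * x j
          = (∑ i, x i * u i) * (∑ j, x j * u j) := by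
        rw [Finset.sum_mul_sum Finset.univ Finset.univ (fun i => x i * u i)
          (fun j => x j * u j)]
        exact Finset.sum_congr rfl fun i _ => Finset.sum_congr rfl fun j _ => by
          simp [Matrix.of_apply]; ring
      rw [this]
      exact mul_self_nonneg _
    -- key decomposition of the Schur complement of A ⊙ B
    have hdecomp : schurAux (A ⊙ B)
        = (schurAux A ⊙ B.toBlocks₂₂)
          + a⁻¹ • ((Matrix.of fun i j : Fin m => u i * u j) ⊙ schurAux B) := by
      ext i j
      simp only [schurAux, Matrix.add_apply, Matrix.smul_apply, hadamard_apply,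
        Matrix.of_apply, hadamard_apply, Matrix.toBlocks₂₂, smul_eq_mul]
      rw [herm_apply' hA.1 (.inl 0) (.inr j), herm_apply' hB.1 (.inl 0) (.inr j)]
      simp only [hu, hv, ha_def, hb_def]
      have hane : A (Sum.inl 0) (Sum.inl 0) ≠ 0 := ha.ne'
      have hbne : B (Sum.inl 0) (Sum.inl 0) ≠ 0 := hb.ne'
      field_simp
      ring
    have hstep1 : (schurAux A ⊙ B.toBlocks₂₂).det ≤ (schurAux (A ⊙ B)).det := by
      refine det_mono_psd (psd_hadamard hSApsd hB22psd) ?_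
      rw [hdecomp, add_sub_cancel_left]
      exact psd_smul (psd_hadamard hrank1 hSBpsd) (inv_nonneg.mpr ha.le)
    have hstep2 := ih (schurAux A) B.toBlocks₂₂ hSA hB22psd
    have hprod22 : ∏ i : Fin m, B.toBlocks₂₂ i i = ∏ i : Fin m, B (.inr i) (.inr i) := rfl
    calc A.det * ∏ i, B i i = (a * b) * ((schurAux A).det * ∏ i : Fin m, B.toBlocks₂₂ i i) := by
          rw [hdetA, hprodB, hprod22]; ring
      _ ≤ (a * b) * (schurAux A ⊙ B.toBlocks₂₂).det := by
          exact mul_le_mul_of_nonneg_left hstep2 hab.le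
      _ ≤ (a * b) * (schurAux (A ⊙ B)).det := mul_le_mul_of_nonneg_left hstep1 hab.le
      _ = (A ⊙ B).det := hdetAB.symm

lemma posDef_submatrix_equiv {p : Type*} [Fintype p] [DecidableEq p] {M : Matrix n n ℝ}
    (hM : M.PosDef) (e : p ≃ n) : (M.submatrix e e).PosDef := by
  refine PosDef.of_dotProduct_mulVec_pos ?_ (fun x hx => ?_)
  · ext i j
    simp [conjTranspose_apply, Matrix.submatrix_apply, herm_apply' hM.1]
  · have hx' : (fun a => x (e.symm a)) ≠ 0 := by
      intro h
      apply hx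
      ext i
      have := congrFun h (e i)
      simpa using this
    have hpos := hM.dotProduct_mulVec_pos hx'
    rw [form_eq] at hpos ⊢
    have key : ∑ a, ∑ b, x (e.symm a) * M a b * x (e.symm b)
        = ∑ i, ∑ j, x i * (M.submatrix e e) i j * x j := by
      rw [← Equiv.sum_comp e (fun a => ∑ b, x (e.symm a) * M a b * x (e.symm b))]
      refine Finset.sum_congr rfl fun i _ => ?_
      rw [← Equiv.sum_comp e (fun b => x (e.symm (e i)) * M (e i) b * x (e.symm b))]
      simp [Matrix.submatrix_apply]
    rw [← key]
    exact hpos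

/-- **Oppenheim's inequality** for a positive definite matrix `A` and a positive semidefinite
matrix `B`. -/
lemma oppenheim : ∀ (m : ℕ) (A B : Matrix (Fin m) (Fin m) ℝ), A.PosDef → B.PosSemidef →
    A.det * ∏ i, B i i ≤ (A ⊙ B).det := by
  intro m
  induction m with
  | zero =>
      intro A B _ _
      simp [Matrix.det_fin_zero]
  | succ m ih =>
      intro A B hA hB
      set E : (Fin 1 ⊕ Fin m) ≃ Fin (m + 1) := finSumFinEquiv.trans (finCongr (Nat.add_comm 1 m))
        with hE
      have hA' : (A.submatrix E E).PosDef := posDef_submatrix_equiv hA E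
      have hB' : (B.submatrix E E).PosSemidef := hB.submatrix E
      have hkey := oppenheim_sum ih (A.submatrix E E) (B.submatrix E E) hA' hB'
      have hdetA : (A.submatrix E E).det = A.det := Matrix.det_submatrix_equiv_self E A
      have hhad : (A.submatrix E E) ⊙ (B.submatrix E E) = (A ⊙ B).submatrix E E := by
        ext i j
        rfl
      have hdetAB : ((A ⊙ B).submatrix E E).det = (A ⊙ B).det :=
        Matrix.det_submatrix_equiv_self E _
      have hprod : ∏ i : Fin 1 ⊕ Fin m, (B.submatrix E E) i i = ∏ i, B i i := by
        exact Equiv.prod_comp E (fun a => B a a)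
      rw [hdetA, hhad, hdetAB, hprod] at hkey
      exact hkey


lemma se_diag_one {d : ℕ} (w : Fin d → ℝ) (x : Fin d → ℝ) :
    Real.exp (-(1 / 2 : ℝ) * ∑ l, w l * (x l - x l) ^ 2) = 1 := by
  simp

/-- The key determinant comparison: shrinking the lengthscales increases
`det (1 + σ⁻² K)`. -/
lemma key_det {d T : ℕ} {σ : ℝ} (hσ : 0 < σ) {θ θ' : Fin d → ℝ} (hθ' : ∀ i, 0 < θ' i)
    (hle : ∀ i, θ' i ≤ θ i) (a : Fin T → (Fin d → ℝ)) :
    (1 + (σ ^ 2)⁻¹ • Matrix.of fun i j =>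
      Real.exp (-(1 / 2) * ∑ l, (a i l - a j l) ^ 2 / (θ l) ^ 2)).det
    ≤ (1 + (σ ^ 2)⁻¹ • Matrix.of fun i j =>
      Real.exp (-(1 / 2) * ∑ l, (a i l - a j l) ^ 2 / (θ' l) ^ 2)).det := by
  have hθpos : ∀ l, 0 < θ l := fun l => lt_of_lt_of_le (hθ' l) (hle l)
  set c : ℝ := (σ ^ 2)⁻¹ with hc_def
  have hc : 0 < c := by positivity
  set w1 : Fin d → ℝ := fun l => ((θ l) ^ 2)⁻¹ with hw1
  set w2 : Fin d → ℝ := fun l => ((θ' l) ^ 2)⁻¹ with hw2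
  set w0 : Fin d → ℝ := fun l => w2 l - w1 l with hw0
  have hw1pos : ∀ l, 0 ≤ w1 l := fun l => by positivity
  have hw0pos : ∀ l, 0 ≤ w0 l := by
    intro l
    have h2 : (θ' l) ^ 2 ≤ (θ l) ^ 2 := by nlinarith [hθ' l, hle l, hθpos l]
    have := inv_anti₀ (pow_pos (hθ' l) 2) h2
    simp only [hw0, hw1, hw2, sub_nonneg]
    exact this
  have hdiv : ∀ (t : Fin d → ℝ) (x y : Fin d → ℝ),
      ∑ l, (x l - y l) ^ 2 / (t l) ^ 2 = ∑ l, ((t l) ^ 2)⁻¹ * (x l - y l) ^ 2 := by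
    intro t x y
    exact Finset.sum_congr rfl fun l _ => by rw [div_eq_mul_inv, mul_comm]
  set K1 : Matrix (Fin T) (Fin T) ℝ := Matrix.of fun i j =>
      Real.exp (-(1 / 2) * ∑ l, w1 l * (a i l - a j l) ^ 2) with hK1
  set K2 : Matrix (Fin T) (Fin T) ℝ := Matrix.of fun i j =>
      Real.exp (-(1 / 2) * ∑ l, w2 l * (a i l - a j l) ^ 2) with hK2
  set M : Matrix (Fin T) (Fin T) ℝ := Matrix.of fun i j =>
      Real.exp (-(1 / 2) * ∑ l, w0 l * (a i l - a j l) ^ 2) with hM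
  have hK1eq : (Matrix.of fun i j =>
      Real.exp (-(1 / 2) * ∑ l, (a i l - a j l) ^ 2 / (θ l) ^ 2)) = K1 := by
    ext i j
    simp only [hK1, Matrix.of_apply]
    rw [hdiv θ]
  have hK2eq : (Matrix.of fun i j =>
      Real.exp (-(1 / 2) * ∑ l, (a i l - a j l) ^ 2 / (θ' l) ^ 2)) = K2 := by
    ext i j
    simp only [hK2, Matrix.of_apply]
    rw [hdiv θ']
  rw [hK1eq, hK2eq]
  have hK1psd : K1.PosSemidef := psd_se w1 hw1pos a
  have hMpsd : M.PosSemidef := psd_se w0 hw0pos a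
  have hApos : (1 + c • K1).PosDef :=
    Matrix.PosDef.one.add_posSemidef (psd_smul hK1psd hc.le)
  have hMdiag : ∀ i, M i i = 1 := fun i => se_diag_one w0 (a i)
  -- multiplicative decomposition of the kernel
  have hKmul : ∀ i j, K2 i j = K1 i j * M i j := by
    intro i j
    rw [hK1, hK2, hM, Matrix.of_apply, Matrix.of_apply, Matrix.of_apply, ← Real.exp_add]
    congr 1
    have : ∀ l : Fin d, w2 l * (a i l - a j l) ^ 2
        = w1 l * (a i l - a j l) ^ 2 + w0 l * (a i l - a j l) ^ 2 := by
      intro l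
      simp only [hw0]
      ring
    rw [Finset.sum_congr rfl fun l _ => this l, Finset.sum_add_distrib]
    ring
  have hident : 1 + c • K2 = (1 + c • K1) ⊙ M := by
    ext i j
    simp only [Matrix.add_apply, hadamard_apply, Matrix.smul_apply, smul_eq_mul]
    rw [hKmul i j]
    by_cases h : i = j
    · subst h
      rw [Matrix.one_apply_eq, hMdiag i]
      ring
    · rw [Matrix.one_apply_ne h]
      ring
  have hopp := oppenheim T (1 + c • K1) M hApos hMpsd
  rw [Finset.prod_congr rfl (fun i _ => hMdiag i), Finset.prod_const_one, mul_one] at hopp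
  rw [hident]
  exact hopp


lemma sum_div_sq_eq {d : ℕ} (t x y : Fin d → ℝ) :
    ∑ l, (x l - y l) ^ 2 / (t l) ^ 2 = ∑ l, ((t l) ^ 2)⁻¹ * (x l - y l) ^ 2 :=
  Finset.sum_congr rfl fun l _ => by rw [div_eq_mul_inv, mul_comm]

lemma posdef_info {d T : ℕ} {σ : ℝ} (hσ : 0 < σ) {θ : Fin d → ℝ} (hθ : ∀ l, 0 < θ l)
    (a : Fin T → (Fin d → ℝ)) :
    (1 + (σ ^ 2)⁻¹ • Matrix.of fun i j =>
      Real.exp (-(1 / 2) * ∑ l, (a i l - a j l) ^ 2 / (θ l) ^ 2)).PosDef := by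
  have heq : (Matrix.of fun i j : Fin T =>
      Real.exp (-(1 / 2) * ∑ l, (a i l - a j l) ^ 2 / (θ l) ^ 2))
      = Matrix.of fun i j =>
        Real.exp (-(1 / 2) * ∑ l, ((θ l) ^ 2)⁻¹ * (a i l - a j l) ^ 2) := by
    ext i j
    simp only [Matrix.of_apply]
    rw [sum_div_sq_eq]
  rw [heq]
  exact Matrix.PosDef.one.add_posSemidef
    (psd_smul (psd_se _ (fun l => by positivity) a)
      (by positivity))

lemma det_info_le {d T : ℕ} {σ : ℝ} (hσ : 0 < σ) (θ : Fin d → ℝ)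
    (a : Fin T → (Fin d → ℝ)) :
    (1 + (σ ^ 2)⁻¹ • Matrix.of fun i j =>
      Real.exp (-(1 / 2) * ∑ l, (a i l - a j l) ^ 2 / (θ l) ^ 2)).det
      ≤ (T.factorial : ℝ) * (1 + (σ ^ 2)⁻¹) ^ T := by
  set c : ℝ := (σ ^ 2)⁻¹ with hc_def
  have hc : 0 < c := by positivity
  set P : Matrix (Fin T) (Fin T) ℝ := 1 + c • Matrix.of fun i j =>
      Real.exp (-(1 / 2) * ∑ l, (a i l - a j l) ^ 2 / (θ l) ^ 2) with hP
  have hentry : ∀ i j, |P i j| ≤ 1 + c := by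
    intro i j
    have hsum : (0:ℝ) ≤ ∑ l, (a i l - a j l) ^ 2 / (θ l) ^ 2 :=
      Finset.sum_nonneg fun l _ => div_nonneg (sq_nonneg _) (sq_nonneg _)
    have hexple : Real.exp (-(1 / 2) * ∑ l, (a i l - a j l) ^ 2 / (θ l) ^ 2) ≤ 1 :=
      Real.exp_le_one_iff.mpr (by nlinarith)
    have hexppos : 0 < Real.exp (-(1 / 2) * ∑ l, (a i l - a j l) ^ 2 / (θ l) ^ 2) :=
      Real.exp_pos _
    have hPij : P i j = (1 : Matrix (Fin T) (Fin T) ℝ) i j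
        + c * Real.exp (-(1 / 2) * ∑ l, (a i l - a j l) ^ 2 / (θ l) ^ 2) := rfl
    rw [hPij]
    by_cases h : i = j
    · subst h
      rw [Matrix.one_apply_eq, abs_of_nonneg (by nlinarith)]
      nlinarith
    · rw [Matrix.one_apply_ne h, zero_add, abs_of_nonneg (by nlinarith)]
      nlinarith
  have hd := Matrix.det_le (A := P) (abv := (AbsoluteValue.abs : AbsoluteValue ℝ ℝ))
    (x := 1 + c) hentry
  simp only [Fintype.card_fin, nsmul_eq_mul] at hd
  calc P.det ≤ |P.det| := le_abs_self _
    _ ≤ (T.factorial : ℝ) * (1 + c) ^ T := hd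

end SEAux

/-- For the squared-exponential kernel with lengthscales `θ`, shrinking the
lengthscales componentwise (`θ' ≤ θ`) can only increase the maximum information gain:
`γ_T^θ ≤ γ_T^{θ'}`. -/
theorem infoGain_mono_in_lengthscale
    (d : ℕ) (hd : 1 ≤ d) (σ : ℝ) (hσ : 0 < σ) (X : Set (Fin d → ℝ))
    (θ θ' : Fin d → ℝ) (hθ' : ∀ i, 0 < θ' i) (hle : ∀ i, θ' i ≤ θ i)
    (T : ℕ) (hT : 1 ≤ T) :
    let k : (Fin d → ℝ) → (Fin d → ℝ) → (Fin d → ℝ) → ℝ :=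
      fun t x y => Real.exp (-(1 / 2) * ∑ i, (x i - y i) ^ 2 / (t i) ^ 2)
    let γ : (Fin d → ℝ) → ℝ := fun t =>
      sSup {g : ℝ | ∃ a : Fin T → (Fin d → ℝ), Function.Injective a ∧ (∀ i, a i ∈ X) ∧
        g = (1 / 2) * Real.log
          ((1 + (σ ^ 2)⁻¹ • Matrix.of fun i j => k t (a i) (a j)).det)}
    γ θ ≤ γ θ' := by
  intro k γ
  have hθpos : ∀ i, 0 < θ i := fun i => lt_of_lt_of_le (hθ' i) (hle i)
  have hkmat : ∀ (t : Fin d → ℝ) (a : Fin T → (Fin d → ℝ)),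
      (Matrix.of fun i j => k t (a i) (a j))
        = Matrix.of fun i j =>
            Real.exp (-(1 / 2) * ∑ l, (a i l - a j l) ^ 2 / (t l) ^ 2) := fun t a => rfl
  by_cases hex : ∃ a : Fin T → (Fin d → ℝ), Function.Injective a ∧ ∀ i, a i ∈ X
  · obtain ⟨a₀, h0inj, h0mem⟩ := hex
    have hbdd : BddAbove {g : ℝ | ∃ a : Fin T → (Fin d → ℝ), Function.Injective a ∧
        (∀ i, a i ∈ X) ∧ g = (1 / 2) * Real.log
          ((1 + (σ ^ 2)⁻¹ • Matrix.of fun i j => k θ' (a i) (a j)).det)} := by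
      refine ⟨(1 / 2) * Real.log ((T.factorial : ℝ) * (1 + (σ ^ 2)⁻¹) ^ T), fun g hg => ?_⟩
      obtain ⟨a, hinj, hmem, rfl⟩ := hg
      rw [hkmat θ' a]
      have hpos := (SEAux.posdef_info (T := T) hσ hθ' a).det_pos
      have hleb := SEAux.det_info_le (T := T) hσ θ' a
      have hbound : (0:ℝ) < (T.factorial : ℝ) * (1 + (σ ^ 2)⁻¹) ^ T := by positivity
      refine mul_le_mul_of_nonneg_left ?_ (by norm_num)
      exact (Real.log_le_log_iff hpos hbound).mpr hleb
    refine csSup_le ⟨(1 / 2) * Real.log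
        ((1 + (σ ^ 2)⁻¹ • Matrix.of fun i j => k θ (a₀ i) (a₀ j)).det),
        ⟨a₀, h0inj, h0mem, rfl⟩⟩ (fun g hg => ?_)
    obtain ⟨a, hinj, hmem, rfl⟩ := hg
    have hdetθ := (SEAux.posdef_info (T := T) hσ hθpos a).det_pos
    have hdetθ' := (SEAux.posdef_info (T := T) hσ hθ' a).det_pos
    have hkey := SEAux.key_det (T := T) hσ hθ' hle a
    have hlog : (1 / 2) * Real.log ((1 + (σ ^ 2)⁻¹ • Matrix.of fun i j => k θ (a i) (a j)).det)
        ≤ (1 / 2) * Real.log ((1 + (σ ^ 2)⁻¹ • Matrix.of fun i j => k θ' (a i) (a j)).det) := by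
      rw [hkmat θ a, hkmat θ' a]
      exact mul_le_mul_of_nonneg_left
        ((Real.log_le_log_iff hdetθ hdetθ').mpr hkey) (by norm_num)
    exact le_trans hlog (le_csSup hbdd ⟨a, hinj, hmem, rfl⟩)
  · have hempty : ∀ t : Fin d → ℝ, {g : ℝ | ∃ a : Fin T → (Fin d → ℝ), Function.Injective a ∧
        (∀ i, a i ∈ X) ∧ g = (1 / 2) * Real.log
          ((1 + (σ ^ 2)⁻¹ • Matrix.of fun i j => k t (a i) (a j)).det)} = ∅ := by
      intro t
      rw [Set.eq_empty_iff_forall_notMem]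
      rintro g ⟨a, hinj, hmem, _⟩
      exact hex ⟨a, hinj, hmem⟩
    show sSup {g : ℝ | ∃ a : Fin T → (Fin d → ℝ), Function.Injective a ∧ (∀ i, a i ∈ X) ∧
        g = (1 / 2) * Real.log
          ((1 + (σ ^ 2)⁻¹ • Matrix.of fun i j => k θ (a i) (a j)).det)}
      ≤ sSup {g : ℝ | ∃ a : Fin T → (Fin d → ℝ), Function.Injective a ∧ (∀ i, a i ∈ X) ∧
        g = (1 / 2) * Real.log
          ((1 + (σ ^ 2)⁻¹ • Matrix.of fun i j => k θ' (a i) (a j)).det)}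
    rw [hempty θ, hempty θ']
end

section
/- Let K be a T×T real symmetric positive semidefinite matrix with all diagonal entries K_{t,t} ≤ 1, and let σ > 0. For 1 ≤ t ≤ T, define the posterior variance s_t² = K_{t,t} − k_tᵀ (K_{t−1} + σ² I)^{−1} k_t. Then Σ_{t=1}^T s_t² ≤ (2 / log(1 + σ^{−2})) · (1/2) log det(I + σ^{−2} K). -/
open Matrix

namespace InfoGainAux

/-- Posterior variance at index `t`. -/
noncomputable def sSqM {m : ℕ} (K : Matrix (Fin m) (Fin m) ℝ) (σ : ℝ) (t : Fin m) : ℝ :=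
  K t t - (fun i => K (Fin.castLE t.isLt.le i) t) ⬝ᵥ
    ((Matrix.of fun i j => K (Fin.castLE t.isLt.le i) (Fin.castLE t.isLt.le j)) +
      σ ^ 2 • (1 : Matrix (Fin t.val) (Fin t.val) ℝ))⁻¹.mulVec
      (fun i => K (Fin.castLE t.isLt.le i) t)

lemma posDef_smul_one {m : ℕ} {σ : ℝ} (hσ : 0 < σ) :
    (σ ^ 2 • (1 : Matrix (Fin m) (Fin m) ℝ)).PosDef := by
  rw [smul_one_eq_diagonal]
  exact Matrix.PosDef.diagonal fun _ => by positivity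

lemma posSemidef_fromBlocks_zero {m p : ℕ} {Q : Matrix (Fin m) (Fin m) ℝ} (hQ : Q.PosSemidef) :
    (fromBlocks Q 0 0 (0 : Matrix (Fin p) (Fin p) ℝ)).PosSemidef := by
  refine PosSemidef.of_dotProduct_mulVec_nonneg ?_ ?_
  · show _ᴴ = _
    rw [fromBlocks_conjTranspose, hQ.1]
    simp
  · intro x
    rw [← Sum.elim_comp_inl_inr x, fromBlocks_mulVec]
    simp only [Sum.elim_comp_inl, Sum.elim_comp_inr, zero_mulVec, add_zero, zero_add,
      star_trivial, sumElim_dotProduct_sumElim, dotProduct_zero]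
    simpa using hQ.dotProduct_mulVec_nonneg (x ∘ Sum.inl)

lemma entry_eq_dot {m : ℕ} (N : Matrix (Fin m) (Fin m) ℝ) (k : Fin m → ℝ) (a b : Fin 1) :
    ((Matrix.of fun i (_ : Fin 1) => k i)ᴴ * N * (Matrix.of fun i (_ : Fin 1) => k i)) a b
      = k ⬝ᵥ N *ᵥ k := by
  simp only [Matrix.mul_apply, Matrix.conjTranspose_apply, Matrix.of_apply, star_trivial,
    dotProduct, Matrix.mulVec, Finset.sum_mul, Finset.mul_sum]
  rw [Finset.sum_comm]
  exact Finset.sum_congr rfl fun i _ => Finset.sum_congr rfl fun j _ => by ring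

section Key

variable {n : ℕ} {σ : ℝ}

/-- The symmetric matrix `M + cI` reindexed along `finSumFinEquiv` is a block matrix. -/
lemma reindex_eq (M : Matrix (Fin (n + 1)) (Fin (n + 1)) ℝ) (hM : M.IsHermitian) (c : ℝ) :
    (M + c • 1).submatrix (finSumFinEquiv : Fin n ⊕ Fin 1 ≃ Fin (n + 1))
        (finSumFinEquiv : Fin n ⊕ Fin 1 ≃ Fin (n + 1)) =
      fromBlocks (M.submatrix Fin.castSucc Fin.castSucc + c • 1)
        (Matrix.of fun i (_ : Fin 1) => M (Fin.castSucc i) (Fin.last n))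
        (Matrix.of fun i (_ : Fin 1) => M (Fin.castSucc i) (Fin.last n))ᴴ
        (Matrix.of fun (_ _ : Fin 1) => M (Fin.last n) (Fin.last n) + c) := by
  have he1 : ∀ i : Fin n, finSumFinEquiv (Sum.inl i) = Fin.castSucc i := fun i => rfl
  have he2 : ∀ j : Fin 1, finSumFinEquiv (Sum.inr j) = Fin.last n := fun j => by
    have : j = 0 := Subsingleton.elim _ _
    subst this; rfl
  ext i j
  rcases i with i | i <;> rcases j with j | j <;>
    simp only [submatrix_apply, he1, he2, fromBlocks_apply₁₁, fromBlocks_apply₁₂,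
      fromBlocks_apply₂₁, fromBlocks_apply₂₂, Matrix.add_apply, Matrix.smul_apply,
      Matrix.one_apply, Matrix.of_apply, conjTranspose_apply, star_trivial, smul_eq_mul]
  · simp [Fin.castSucc_inj]
  · simp [(Fin.castSucc_lt_last i).ne]
  · have hsym : M (Fin.last n) (Fin.castSucc j) = M (Fin.castSucc j) (Fin.last n) := by
      have := congrFun (congrFun hM.eq (Fin.castSucc j)) (Fin.last n)
      simpa only [conjTranspose_apply, star_trivial] using this
    simp [(Fin.castSucc_lt_last j).ne', hsym]
  · simp

variable (hσ : 0 < σ)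
include hσ

lemma det_step (M : Matrix (Fin (n + 1)) (Fin (n + 1)) ℝ) (hM : M.PosSemidef) :
    (M + σ ^ 2 • 1).det =
      (M.submatrix Fin.castSucc Fin.castSucc + σ ^ 2 • 1).det *
        (σ ^ 2 + sSqM M σ (Fin.last n)) := by
  set A := M.submatrix (Fin.castSucc : Fin n → Fin (n + 1)) Fin.castSucc + σ ^ 2 • 1 with hA
  have hApd : A.PosDef := Matrix.PosDef.posSemidef_add (hM.submatrix _) (posDef_smul_one hσ)
  haveI : Invertible A := hApd.isUnit.invertible
  set B := (Matrix.of fun i (_ : Fin 1) => M (Fin.castSucc i) (Fin.last n)) with hB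
  have h1 : (M + σ ^ 2 • 1).det = (fromBlocks A B Bᴴ
      (Matrix.of fun (_ _ : Fin 1) => M (Fin.last n) (Fin.last n) + σ ^ 2)).det := by
    rw [← Matrix.det_submatrix_equiv_self (finSumFinEquiv : Fin n ⊕ Fin 1 ≃ Fin (n + 1)),
      reindex_eq M hM.1]
  rw [h1, Matrix.det_fromBlocks₁₁, Matrix.det_fin_one, invOf_eq_nonsing_inv]
  congr 1
  rw [Matrix.sub_apply, entry_eq_dot]
  show M (Fin.last n) (Fin.last n) + σ ^ 2 - _ = σ ^ 2 + sSqM M σ (Fin.last n)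
  rw [sSqM]
  have h2 : (fun i => M (Fin.castLE (Fin.last n).isLt.le i) (Fin.last n)) ⬝ᵥ
      ((Matrix.of fun i j => M (Fin.castLE (Fin.last n).isLt.le i)
        (Fin.castLE (Fin.last n).isLt.le j)) + σ ^ 2 •
          (1 : Matrix (Fin (Fin.last n).val) (Fin (Fin.last n).val) ℝ))⁻¹.mulVec
        (fun i => M (Fin.castLE (Fin.last n).isLt.le i) (Fin.last n)) =
      (fun i => M (Fin.castSucc i) (Fin.last n)) ⬝ᵥ
        A⁻¹ *ᵥ (fun i => M (Fin.castSucc i) (Fin.last n)) := rfl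
  rw [h2]
  ring

lemma schur_nonneg (M : Matrix (Fin (n + 1)) (Fin (n + 1)) ℝ) (hM : M.PosSemidef) :
    0 ≤ sSqM M σ (Fin.last n) := by
  set A := M.submatrix (Fin.castSucc : Fin n → Fin (n + 1)) Fin.castSucc + σ ^ 2 • 1 with hA
  have hApd : A.PosDef := Matrix.PosDef.posSemidef_add (hM.submatrix _) (posDef_smul_one hσ)
  haveI : Invertible A := hApd.isUnit.invertible
  set B := (Matrix.of fun i (_ : Fin 1) => M (Fin.castSucc i) (Fin.last n)) with hB
  set D := (Matrix.of fun (_ _ : Fin 1) => (M (Fin.last n) (Fin.last n) : ℝ)) with hD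
  have hMblock : M.submatrix (finSumFinEquiv : Fin n ⊕ Fin 1 ≃ Fin (n + 1)) finSumFinEquiv =
      fromBlocks (M.submatrix Fin.castSucc Fin.castSucc) B Bᴴ D := by
    have h0 := reindex_eq M hM.1 0
    simpa using h0
  have hblock : (fromBlocks A B Bᴴ D).PosSemidef := by
    have h1 : fromBlocks A B Bᴴ D =
        fromBlocks (M.submatrix Fin.castSucc Fin.castSucc) B Bᴴ D +
          fromBlocks (σ ^ 2 • 1) 0 0 (0 : Matrix (Fin 1) (Fin 1) ℝ) := by
      rw [fromBlocks_add]; simp [hA]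
    rw [h1, ← hMblock]
    exact (hM.submatrix _).add (posSemidef_fromBlocks_zero (posDef_smul_one hσ).posSemidef)
  have hschur := (Matrix.PosDef.fromBlocks₁₁ B D hApd).mp hblock
  have h5 := hschur.dotProduct_mulVec_nonneg (fun _ => 1)
  simp only [star_trivial] at h5
  have h6 : (fun (_ : Fin 1) => (1:ℝ)) ⬝ᵥ (D - Bᴴ * A⁻¹ * B) *ᵥ (fun _ => 1) =
      (D - Bᴴ * A⁻¹ * B) 0 0 := by
    simp [dotProduct, Matrix.mulVec, Fin.sum_univ_one]
  rw [h6, Matrix.sub_apply, entry_eq_dot] at h5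
  exact h5

end Key

section General

variable {m : ℕ} {σ : ℝ}

lemma sSq_nonneg (hσ : 0 < σ) (K : Matrix (Fin m) (Fin m) ℝ) (hK : K.PosSemidef) (t : Fin m) :
    0 ≤ sSqM K σ t := by
  have h := schur_nonneg hσ (K.submatrix (Fin.castLE t.isLt) (Fin.castLE t.isLt))
    (hK.submatrix _)
  exact h

lemma sSq_le_diag (hσ : 0 < σ) (K : Matrix (Fin m) (Fin m) ℝ) (hK : K.PosSemidef) (t : Fin m) :
    sSqM K σ t ≤ K t t := by
  have hApd : ((Matrix.of fun i j => K (Fin.castLE t.isLt.le i) (Fin.castLE t.isLt.le j)) +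
      σ ^ 2 • (1 : Matrix (Fin t.val) (Fin t.val) ℝ)).PosDef := by
    have : (Matrix.of fun i j => K (Fin.castLE t.isLt.le i) (Fin.castLE t.isLt.le j)) =
        K.submatrix (Fin.castLE t.isLt.le) (Fin.castLE t.isLt.le) := rfl
    rw [this]
    exact Matrix.PosDef.posSemidef_add (hK.submatrix _) (posDef_smul_one hσ)
  have hq := hApd.inv.posSemidef.dotProduct_mulVec_nonneg (fun i => K (Fin.castLE t.isLt.le i) t)
  simp only [star_trivial] at hq
  rw [sSqM]
  linarith

lemma prod_eq_det (hσ : 0 < σ) :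
    ∀ (n : ℕ) (K : Matrix (Fin n) (Fin n) ℝ), K.PosSemidef →
      ∏ t : Fin n, (σ ^ 2 + sSqM K σ t) = (K + σ ^ 2 • 1).det := by
  intro n
  induction n with
  | zero => intro K hK; simp [Matrix.det_fin_zero]
  | succ n ih =>
    intro K hK
    rw [Fin.prod_univ_castSucc]
    have hcast : ∀ t : Fin n, sSqM K σ (Fin.castSucc t) =
        sSqM (K.submatrix Fin.castSucc Fin.castSucc) σ t := fun t => rfl
    simp only [hcast]
    rw [ih (K.submatrix Fin.castSucc Fin.castSucc) (hK.submatrix _),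
      det_step hσ K hK]

lemma log_bound {c x : ℝ} (hc : 0 < c) (hx0 : 0 ≤ x) (hx1 : x ≤ 1) :
    x * Real.log (1 + c) ≤ Real.log (1 + c * x) := by
  have h := strictConcaveOn_log_Ioi.concaveOn.2 (Set.mem_Ioi.mpr one_pos)
    (Set.mem_Ioi.mpr (by linarith : (0:ℝ) < 1 + c))
    (by linarith : (0:ℝ) ≤ 1 - x) hx0 (by ring)
  rw [show (1 - x) • (1:ℝ) + x • (1 + c) = 1 + c * x by simp only [smul_eq_mul]; ring] at h
  simpa [smul_eq_mul] using h

end General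

end InfoGainAux

open InfoGainAux in
/-- For `K` symmetric PSD with unit-bounded diagonal and `σ > 0`, the sum of
posterior variances is bounded by `(2 / log(1 + σ⁻²))` times the information gain
`(1/2) log det(I + σ⁻² K)`. -/
theorem sum_posterior_variances_le_infoGain
    (T : ℕ) (K : Matrix (Fin T) (Fin T) ℝ) (hK : K.PosSemidef)
    (hdiag : ∀ t, K t t ≤ 1) (σ : ℝ) (hσ : 0 < σ) :
    let sub : (t : Fin T) → Matrix (Fin t.val) (Fin t.val) ℝ :=
      fun t => Matrix.of fun i j => K (Fin.castLE t.isLt.le i) (Fin.castLE t.isLt.le j)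
    let kvec : (t : Fin T) → (Fin t.val → ℝ) :=
      fun t i => K (Fin.castLE t.isLt.le i) t
    let sSq : Fin T → ℝ :=
      fun t => K t t - kvec t ⬝ᵥ (sub t + σ ^ 2 • 1)⁻¹.mulVec (kvec t)
    ∑ t, sSq t ≤ (2 / Real.log (1 + (σ ^ 2)⁻¹)) *
      ((1 / 2) * Real.log ((1 + (σ ^ 2)⁻¹ • K).det)) := by
  intro sub kvec sSq
  have hsseq : ∀ t, sSq t = sSqM K σ t := fun t => rfl
  set c := Real.log (1 + (σ ^ 2)⁻¹) with hc
  have hσ2 : (0:ℝ) < (σ ^ 2)⁻¹ := by positivity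
  have hσ2ne : (σ:ℝ) ^ 2 ≠ 0 := by positivity
  have hcpos : 0 < c := Real.log_pos (by linarith)
  have hnn : ∀ t, 0 ≤ sSq t := fun t => (hsseq t) ▸ sSq_nonneg hσ K hK t
  have hle1 : ∀ t, sSq t ≤ 1 := fun t =>
    le_trans ((hsseq t) ▸ sSq_le_diag hσ K hK t) (hdiag t)
  have hpt : ∀ t, sSq t * c ≤ Real.log (1 + (σ ^ 2)⁻¹ * sSq t) := fun t =>
    log_bound hσ2 (hnn t) (hle1 t)
  have hprod : ∏ t, (1 + (σ ^ 2)⁻¹ * sSq t) = (1 + (σ ^ 2)⁻¹ • K).det := by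
    calc ∏ t, (1 + (σ ^ 2)⁻¹ * sSq t)
        = ∏ t, ((σ ^ 2)⁻¹ * (σ ^ 2 + sSqM K σ t)) := by
          refine Finset.prod_congr rfl fun t _ => ?_
          rw [← hsseq t]; field_simp
      _ = ((σ ^ 2)⁻¹) ^ (Fintype.card (Fin T)) * ∏ t, (σ ^ 2 + sSqM K σ t) := by
          rw [Finset.prod_mul_distrib, Finset.prod_const, Finset.card_univ]
      _ = ((σ ^ 2)⁻¹) ^ (Fintype.card (Fin T)) * (K + σ ^ 2 • 1).det := by
          rw [prod_eq_det hσ T K hK]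
      _ = ((σ ^ 2)⁻¹ • (K + σ ^ 2 • 1)).det := by rw [Matrix.det_smul]
      _ = (1 + (σ ^ 2)⁻¹ • K).det := by
          congr 1
          rw [smul_add, smul_smul, inv_mul_cancel₀ hσ2ne, one_smul, add_comm]
  have hlog : ∑ t, Real.log (1 + (σ ^ 2)⁻¹ * sSq t) =
      Real.log ((1 + (σ ^ 2)⁻¹ • K).det) := by
    rw [← hprod]
    refine (Real.log_prod fun t _ => ?_).symm
    have := mul_nonneg hσ2.le (hnn t)
    positivity
  have hsum : (∑ t, sSq t) * c ≤ Real.log ((1 + (σ ^ 2)⁻¹ • K).det) := by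
    rw [Finset.sum_mul, ← hlog]
    exact Finset.sum_le_sum fun t _ => hpt t
  have hfin : ∑ t, sSq t ≤ Real.log ((1 + (σ ^ 2)⁻¹ • K).det) / c :=
    (le_div_iff₀ hcpos).mpr hsum
  calc ∑ t, sSq t ≤ Real.log ((1 + (σ ^ 2)⁻¹ • K).det) / c := hfin
    _ = (2 / c) * ((1 / 2) * Real.log ((1 + (σ ^ 2)⁻¹ • K).det)) := by ring
end

section
/- Let σ > 0, ν > 0, β ≥ 0, and let μ, f, M be real numbers with |μ − f| ≤ β σ. Set u = (μ − M)/σ, I = max(0, f − M), and EI = ν σ τ(u/ν), where τ(z) = z Φ(z) + φ(z). Then max( I − β σ, (τ(−β/ν) / τ(β/ν)) · I ) ≤ EI ≤ I + (β + ν) σ. -/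
open MeasureTheory Real Set Filter Topology

/-- The standard normal density `φ`. -/
noncomputable def stdNormalPdf (z : ℝ) : ℝ :=
  (Real.sqrt (2 * Real.pi))⁻¹ * Real.exp (-z ^ 2 / 2)

/-- The standard normal cumulative distribution function `Φ`. -/
noncomputable def stdNormalCdf (z : ℝ) : ℝ := ∫ t in Set.Iic z, stdNormalPdf t

/-- `τ(z) = z Φ(z) + φ(z)`. -/
noncomputable def tauEI (z : ℝ) : ℝ := z * stdNormalCdf z + stdNormalPdf z


lemma sqrt2pi_pos : 0 < Real.sqrt (2 * Real.pi) :=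
  Real.sqrt_pos.mpr (by positivity)

lemma pdf_pos (z : ℝ) : 0 < stdNormalPdf z := by
  unfold stdNormalPdf
  positivity

lemma pdf_even (z : ℝ) : stdNormalPdf (-z) = stdNormalPdf z := by
  simp [stdNormalPdf]

lemma pdf_continuous : Continuous stdNormalPdf := by
  unfold stdNormalPdf
  fun_prop

lemma pdf_eq' : stdNormalPdf = fun z => (Real.sqrt (2 * Real.pi))⁻¹ * Real.exp (-(1/2) * z ^ 2) := by
  funext z
  unfold stdNormalPdf
  ring_nf

lemma pdf_integrable : Integrable stdNormalPdf := by
  rw [pdf_eq']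
  exact (integrable_exp_neg_mul_sq (by norm_num : (0:ℝ) < 1/2)).const_mul _

lemma pdf_integrableOn (z : ℝ) : IntegrableOn stdNormalPdf (Set.Iic z) :=
  pdf_integrable.integrableOn

lemma id_mul_pdf_integrable : Integrable (fun t => t * stdNormalPdf t) := by
  have h := (integrable_mul_exp_neg_mul_sq (by norm_num : (0:ℝ) < 1/2)).const_mul
    (Real.sqrt (2 * Real.pi))⁻¹
  convert h using 2 with t
  unfold stdNormalPdf
  ring_nf

lemma pdf_integral : ∫ z, stdNormalPdf z = 1 := by
  rw [pdf_eq']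
  rw [MeasureTheory.integral_const_mul, integral_gaussian]
  rw [show Real.pi / (1/2) = 2 * Real.pi by ring]
  rw [inv_mul_cancel₀ (ne_of_gt sqrt2pi_pos)]

lemma hasDerivAt_pdf (z : ℝ) : HasDerivAt stdNormalPdf (-z * stdNormalPdf z) z := by
  have h1 : HasDerivAt (fun z : ℝ => -z ^ 2 / 2) (-z) z := by
    have := ((hasDerivAt_pow 2 z).neg).div_const 2
    simpa using this.congr_deriv (by ring)
  have h2 := (h1.exp).const_mul (Real.sqrt (2 * Real.pi))⁻¹
  have : stdNormalPdf = fun z => (Real.sqrt (2 * Real.pi))⁻¹ * Real.exp (-z ^ 2 / 2) := rfl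
  rw [this]
  refine h2.congr_deriv ?_
  beta_reduce
  ring

lemma abs_mul_pdf_tendsto :
    Tendsto (fun z => |z| * stdNormalPdf z) atBot (𝓝 0) := by
  have h := (tendsto_rpow_abs_mul_exp_neg_mul_sq_cocompact (by norm_num : (0:ℝ) < 1/2) 1).mono_left
    _root_.atBot_le_cocompact
  have h2 := h.const_mul (Real.sqrt (2 * Real.pi))⁻¹
  rw [mul_zero] at h2
  refine h2.congr fun z => ?_
  rw [pdf_eq']
  simp [Real.rpow_one]
  ring

lemma pdf_tendsto : Tendsto stdNormalPdf atBot (𝓝 0) := by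
  have h := (tendsto_rpow_abs_mul_exp_neg_mul_sq_cocompact (by norm_num : (0:ℝ) < 1/2) 0).mono_left
    _root_.atBot_le_cocompact
  have h2 := h.const_mul (Real.sqrt (2 * Real.pi))⁻¹
  rw [mul_zero] at h2
  refine h2.congr fun z => ?_
  rw [pdf_eq']
  simp [Real.rpow_zero]

lemma id_mul_pdf_tendsto : Tendsto (fun z => z * stdNormalPdf z) atBot (𝓝 0) := by
  have habs : Tendsto (fun z => |z * stdNormalPdf z|) atBot (𝓝 0) := by
    refine abs_mul_pdf_tendsto.congr' ?_
    filter_upwards [eventually_le_atBot (0:ℝ)] with z _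
    rw [abs_mul, abs_of_pos (pdf_pos z)]
  exact tendsto_zero_iff_abs_tendsto_zero _ |>.mpr habs

lemma integral_id_mul_pdf_Iic (z : ℝ) :
    ∫ t in Set.Iic z, t * stdNormalPdf t = -stdNormalPdf z := by
  have h1 : Tendsto (fun a => ∫ t in a..z, t * stdNormalPdf t) atBot
      (𝓝 (∫ t in Set.Iic z, t * stdNormalPdf t)) :=
    intervalIntegral_tendsto_integral_Iic z id_mul_pdf_integrable.integrableOn tendsto_id
  have h2 : ∀ a : ℝ, ∫ t in a..z, t * stdNormalPdf t = stdNormalPdf a - stdNormalPdf z := by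
    intro a
    have := intervalIntegral.integral_eq_sub_of_hasDerivAt
      (a := a) (b := z)
      (f := fun t => -stdNormalPdf t) (f' := fun t => t * stdNormalPdf t)
      (fun t _ => by exact (hasDerivAt_pdf t).neg.congr_deriv (by ring))
      (id_mul_pdf_integrable.intervalIntegrable)
    linarith [this]
  have h3 : Tendsto (fun a => ∫ t in a..z, t * stdNormalPdf t) atBot
      (𝓝 (0 - stdNormalPdf z)) := by
    simp only [h2]
    exact pdf_tendsto.sub tendsto_const_nhds
  have := tendsto_nhds_unique h1 h3
  rw [this]; ring

lemma cdf_nonneg (z : ℝ) : 0 ≤ stdNormalCdf z :=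
  setIntegral_nonneg measurableSet_Iic fun t _ => (pdf_pos t).le

lemma cdf_pos (z : ℝ) : 0 < stdNormalCdf z := by
  rw [stdNormalCdf, setIntegral_pos_iff_support_of_nonneg_ae
    (Filter.Eventually.of_forall fun t => (pdf_pos t).le) (pdf_integrableOn z)]
  have hsupp : Function.support stdNormalPdf ∩ Set.Iic z = Set.Iic z := by
    rw [Set.inter_eq_right]
    intro t _
    exact (pdf_pos t).ne'
  rw [hsupp, Real.volume_Iic]
  simp

lemma cdf_add_neg (z : ℝ) : stdNormalCdf z + stdNormalCdf (-z) = 1 := by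
  have h1 : stdNormalCdf (-z) = ∫ t in Set.Ioi z, stdNormalPdf t := by
    rw [stdNormalCdf]
    calc ∫ t in Set.Iic (-z), stdNormalPdf t
        = ∫ t in Set.Iic (-z), stdNormalPdf (-t) := by
          exact setIntegral_congr_fun measurableSet_Iic fun t _ => (pdf_even t).symm
      _ = ∫ t in Set.Ioi z, stdNormalPdf t := by
          rw [integral_comp_neg_Iic]; norm_num
  rw [stdNormalCdf, h1,
    intervalIntegral.integral_Iic_add_Ioi (pdf_integrableOn z) pdf_integrable.integrableOn,
    pdf_integral]

lemma cdf_le_one (z : ℝ) : stdNormalCdf z ≤ 1 := by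
  have := cdf_add_neg z
  have := cdf_nonneg (-z)
  linarith

lemma tau_eq_integral (z : ℝ) :
    tauEI z = ∫ t in Set.Iic z, (z - t) * stdNormalPdf t := by
  have hsub : ∀ t, (z - t) * stdNormalPdf t = z * stdNormalPdf t - t * stdNormalPdf t :=
    fun t => by ring
  simp only [hsub]
  rw [MeasureTheory.integral_sub ((pdf_integrableOn z).const_mul z)
    id_mul_pdf_integrable.integrableOn, integral_id_mul_pdf_Iic,
    integral_const_mul]
  rw [tauEI, stdNormalCdf]
  ring

lemma tau_pos (z : ℝ) : 0 < tauEI z := by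
  rw [tau_eq_integral]
  have hnn : ∀ t ∈ Set.Iic z, 0 ≤ (z - t) * stdNormalPdf t := fun t ht =>
    mul_nonneg (by simpa using ht) (pdf_pos t).le
  have hint : IntegrableOn (fun t => (z - t) * stdNormalPdf t) (Set.Iic z) := by
    have : (fun t => (z - t) * stdNormalPdf t)
        = fun t => z * stdNormalPdf t - t * stdNormalPdf t := by funext t; ring
    rw [this]
    exact ((pdf_integrableOn z).const_mul z).sub id_mul_pdf_integrable.integrableOn
  have h1 : stdNormalCdf (z - 1) ≤ ∫ t in Set.Iic (z-1), (z - t) * stdNormalPdf t := by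
    rw [stdNormalCdf]
    refine setIntegral_mono_on (pdf_integrableOn _) (hint.mono_set (Iic_subset_Iic.mpr (by linarith)))
      measurableSet_Iic fun t ht => ?_
    have h1t : 1 ≤ z - t := by simp at ht; linarith
    nlinarith [pdf_pos t]
  have h2 : ∫ t in Set.Iic (z-1), (z - t) * stdNormalPdf t
      ≤ ∫ t in Set.Iic z, (z - t) * stdNormalPdf t := by
    refine setIntegral_mono_set hint ?_ (HasSubset.Subset.eventuallyLE (Iic_subset_Iic.mpr (by linarith)))
    refine (ae_restrict_iff' measurableSet_Iic).mpr (Filter.Eventually.of_forall fun t ht => ?_)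
    exact mul_nonneg (by simp at ht; linarith) (pdf_pos t).le
  linarith [cdf_pos (z - 1)]

lemma hasDerivAt_cdf (z : ℝ) : HasDerivAt stdNormalCdf (stdNormalPdf z) z := by
  have heq : stdNormalCdf = fun x => stdNormalCdf 0 + ∫ t in (0:ℝ)..x, stdNormalPdf t := by
    funext x
    rw [← intervalIntegral.integral_Iic_sub_Iic (pdf_integrableOn 0) (pdf_integrableOn x)]
    simp [stdNormalCdf]
  rw [heq]
  exact ((pdf_continuous.integral_hasStrictDerivAt 0 z).hasDerivAt).const_add _

lemma hasDerivAt_tau (z : ℝ) : HasDerivAt tauEI (stdNormalCdf z) z := by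
  have h := ((hasDerivAt_id z).mul (hasDerivAt_cdf z)).add (hasDerivAt_pdf z)
  have heq : tauEI = fun z => z * stdNormalCdf z + stdNormalPdf z := rfl
  rw [heq]
  refine h.congr_deriv ?_
  simp only [id_eq]
  ring

lemma tau_mono : Monotone tauEI :=
  monotone_of_deriv_nonneg (fun z => (hasDerivAt_tau z).differentiableAt)
    (fun z => by rw [(hasDerivAt_tau z).deriv]; exact cdf_nonneg z)

lemma tau_sub_neg (z : ℝ) : tauEI z - tauEI (-z) = z := by
  have h := cdf_add_neg z
  have h2 := pdf_even z
  simp only [tauEI] at *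
  linear_combination z * h - h2

lemma tau_ge (z : ℝ) : z ≤ tauEI z := by
  have := tau_sub_neg z
  have := tau_pos (-z)
  linarith

lemma tau_zero : tauEI 0 = stdNormalPdf 0 := by simp [tauEI]

lemma tau_le (z : ℝ) : tauEI z ≤ max z 0 + stdNormalPdf 0 := by
  rcases le_total z 0 with h | h
  · have h2 := tau_mono h
    rw [max_eq_right h]
    rw [tau_zero] at h2
    linarith
  · have h2 := tau_mono (neg_nonpos_of_nonneg h)
    rw [tau_zero] at h2
    have := tau_sub_neg z
    rw [max_eq_left h]
    linarith

lemma cdf_mills {z : ℝ} : stdNormalCdf z * (-z) ≤ stdNormalPdf z := by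
  have h := tau_pos z
  simp only [tauEI] at h
  nlinarith

noncomputable def qEI (z : ℝ) : ℝ := (1 + z^2) * stdNormalCdf z + z * stdNormalPdf z

lemma hasDerivAt_q (z : ℝ) : HasDerivAt qEI (2 * tauEI z) z := by
  have h1 : HasDerivAt (fun z : ℝ => 1 + z ^ 2) (2 * z) z := by
    simpa using ((hasDerivAt_pow 2 z).const_add 1).congr_deriv (by ring)
  have h := (h1.mul (hasDerivAt_cdf z)).add ((hasDerivAt_id z).mul (hasDerivAt_pdf z))
  have heq : qEI = fun z => (1 + z^2) * stdNormalCdf z + z * stdNormalPdf z := rfl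
  rw [heq]
  refine h.congr_deriv ?_
  simp only [tauEI, id_eq]
  ring

lemma q_mono : Monotone qEI :=
  monotone_of_deriv_nonneg (fun z => (hasDerivAt_q z).differentiableAt)
    (fun z => by rw [(hasDerivAt_q z).deriv]; linarith [tau_pos z])

lemma q_tendsto : Tendsto qEI atBot (𝓝 0) := by
  refine tendsto_of_tendsto_of_tendsto_of_le_of_le' id_mul_pdf_tendsto pdf_tendsto ?_ ?_
  · filter_upwards [eventually_le_atBot (-1:ℝ)] with z hz
    have h1 := cdf_nonneg z
    simp only [qEI]
    nlinarith [sq_nonneg z]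
  · filter_upwards [eventually_le_atBot (-1:ℝ)] with z hz
    have hC := cdf_mills (z := z)
    have hP := pdf_pos z
    have hC0 := cdf_nonneg z
    simp only [qEI]
    nlinarith [mul_le_mul_of_nonneg_left hC (by positivity : (0:ℝ) ≤ 1 + z^2)]

lemma q_nonneg (z : ℝ) : 0 ≤ qEI z :=
  le_of_tendsto q_tendsto ((eventually_le_atBot z).mono fun w hw => q_mono hw)

noncomputable def hEI (z : ℝ) : ℝ := stdNormalCdf z ^ 2 - stdNormalPdf z * tauEI z

lemma hasDerivAt_h (z : ℝ) : HasDerivAt hEI (stdNormalPdf z * qEI z) z := by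
  have h := (((hasDerivAt_cdf z).pow 2)).sub ((hasDerivAt_pdf z).mul (hasDerivAt_tau z))
  have heq : hEI = fun z => stdNormalCdf z ^ 2 - stdNormalPdf z * tauEI z := rfl
  rw [heq]
  refine h.congr_deriv ?_
  simp only [tauEI, qEI, id_eq]
  ring

lemma h_mono : Monotone hEI :=
  monotone_of_deriv_nonneg (fun z => (hasDerivAt_h z).differentiableAt)
    (fun z => by
      rw [(hasDerivAt_h z).deriv]
      exact mul_nonneg (pdf_pos z).le (q_nonneg z))

lemma h_tendsto : Tendsto hEI atBot (𝓝 0) := by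
  have hsq : Tendsto (fun z => stdNormalPdf z * stdNormalPdf z) atBot (𝓝 0) := by
    simpa using pdf_tendsto.mul pdf_tendsto
  have hneg : Tendsto (fun z => -(stdNormalPdf z * stdNormalPdf z)) atBot (𝓝 0) := by
    simpa using hsq.neg
  refine tendsto_of_tendsto_of_tendsto_of_le_of_le' hneg hsq ?_ ?_
  · filter_upwards [eventually_le_atBot (0:ℝ)] with z hz
    have hP := pdf_pos z
    have hC := cdf_nonneg z
    simp only [hEI, tauEI]
    nlinarith [sq_nonneg (stdNormalCdf z), mul_nonneg hP.le (mul_nonneg (neg_nonneg.mpr hz) hC)]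
  · filter_upwards [eventually_le_atBot (-1:ℝ)] with z hz
    have hC := cdf_mills (z := z)
    have hP := pdf_pos z
    have hC0 := cdf_nonneg z
    have hT := tau_pos z
    simp only [hEI]
    have hC2 : stdNormalCdf z ≤ stdNormalPdf z := by nlinarith
    nlinarith [mul_nonneg hP.le hT.le, pow_le_pow_left₀ hC0 hC2 2]

lemma h_nonneg (z : ℝ) : stdNormalPdf z * tauEI z ≤ stdNormalCdf z ^ 2 := by
  have h : 0 ≤ hEI z :=
    le_of_tendsto h_tendsto ((eventually_le_atBot z).mono fun w hw => h_mono hw)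
  simp only [hEI] at h
  linarith

lemma cdf_div_tau_antitone : Antitone (fun z => stdNormalCdf z / tauEI z) := by
  have hd : ∀ z, HasDerivAt (fun z => stdNormalCdf z / tauEI z)
      ((stdNormalPdf z * tauEI z - stdNormalCdf z * stdNormalCdf z) / tauEI z ^ 2) z :=
    fun z => (hasDerivAt_cdf z).div (hasDerivAt_tau z) (tau_pos z).ne'
  refine antitone_of_deriv_nonpos (fun z => (hd z).differentiableAt) (fun z => ?_)
  rw [(hd z).deriv]
  apply div_nonpos_of_nonpos_of_nonneg
  · have := h_nonneg z
    nlinarith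
  · positivity

lemma key_s14 {x y : ℝ} (hxy : x ≤ y) : stdNormalCdf y * tauEI x ≤ stdNormalCdf x * tauEI y := by
  have h := cdf_div_tau_antitone hxy
  rwa [div_le_div_iff₀ (tau_pos y) (tau_pos x)] at h

lemma ratio {b t : ℝ} (hb : 0 ≤ b) (ht : -b ≤ t) :
    tauEI (-b) * tauEI (t + b) ≤ tauEI t * tauEI 0 := by
  have hd : ∀ s : ℝ, HasDerivAt (fun s => tauEI s / tauEI (s + b))
      ((stdNormalCdf s * tauEI (s + b) - tauEI s * stdNormalCdf (s + b)) / tauEI (s + b) ^ 2) s := by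
    intro s
    have hinner : HasDerivAt (fun s : ℝ => s + b) 1 s := (hasDerivAt_id s).add_const b
    have houter : HasDerivAt (fun s : ℝ => tauEI (s + b)) (stdNormalCdf (s + b)) s := by
      simpa [Function.comp_def] using (hasDerivAt_tau (s + b)).comp s hinner
    exact (hasDerivAt_tau s).div houter (tau_pos (s + b)).ne'
  have hmono : Monotone (fun s => tauEI s / tauEI (s + b)) := by
    refine monotone_of_deriv_nonneg (fun s => (hd s).differentiableAt) (fun s => ?_)
    rw [(hd s).deriv]
    apply div_nonneg _ (by positivity)
    have := key_s14 (le_add_of_nonneg_right hb : s ≤ s + b)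
    nlinarith
  have h := hmono ht
  simp only [neg_add_cancel] at h
  rwa [div_le_div_iff₀ (tau_pos 0) (tau_pos (t + b))] at h

lemma lin {b t : ℝ} (hb : 0 ≤ b) (ht : -b ≤ t) :
    tauEI (-b) * (t + b) ≤ tauEI t * tauEI b :=
  calc tauEI (-b) * (t + b) ≤ tauEI (-b) * tauEI (t + b) :=
        mul_le_mul_of_nonneg_left (tau_ge _) (tau_pos _).le
    _ ≤ tauEI t * tauEI 0 := ratio hb ht
    _ ≤ tauEI t * tauEI b := mul_le_mul_of_nonneg_left (tau_mono hb) (tau_pos _).le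

lemma pdf_zero_le_one : stdNormalPdf 0 ≤ 1 := by
  have h1 : 1 ≤ Real.sqrt (2 * Real.pi) := by
    rw [show (1:ℝ) = Real.sqrt 1 by simp]
    exact Real.sqrt_le_sqrt (by nlinarith [Real.pi_gt_three])
  have h2 : (Real.sqrt (2 * Real.pi))⁻¹ ≤ 1 := inv_le_one_of_one_le₀ h1
  have h3 : stdNormalPdf 0 = (Real.sqrt (2 * Real.pi))⁻¹ := by
    simp [stdNormalPdf]
  rw [h3]
  exact h2

/-- If `|μ − f| ≤ βσ`, `u = (μ − M)/σ`, `I = max(0, f − M)` and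
`EI = νσ τ(u/ν)`, then `max(I − βσ, (τ(−β/ν)/τ(β/ν)) I) ≤ EI ≤ I + (β + ν)σ`. -/
theorem expected_improvement_bounds
    (σ ν β μ f M : ℝ) (hσ : 0 < σ) (hν : 0 < ν) (hβ : 0 ≤ β)
    (hconc : |μ - f| ≤ β * σ) :
    let u : ℝ := (μ - M) / σ
    let I : ℝ := max 0 (f - M)
    let EI : ℝ := ν * σ * tauEI (u / ν)
    max (I - β * σ) ((tauEI (-β / ν) / tauEI (β / ν)) * I) ≤ EI ∧
      EI ≤ I + (β + ν) * σ := by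
  intro u I EI
  obtain ⟨h1, h2⟩ := abs_le.mp hconc
  have hu : u = (μ - M) / σ := rfl
  have hI : I = max 0 (f - M) := rfl
  have hEI : EI = ν * σ * tauEI (u / ν) := rfl
  set t : ℝ := u / ν with htdef
  set b : ℝ := β / ν with hbdef
  have hb : 0 ≤ b := by positivity
  have hνσ : 0 < ν * σ := by positivity
  have hμM : μ - M = ν * σ * t := by
    rw [htdef, hu]; field_simp
  have hβσ : β * σ = ν * σ * b := by
    rw [hbdef]; field_simp
  have hmax : ν * σ * max t 0 = max (μ - M) 0 := by
    rw [hμM, mul_max_of_nonneg _ _ hνσ.le, mul_zero]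
  have hnegb : -β / ν = -b := by rw [hbdef]; ring
  refine ⟨max_le ?_ ?_, ?_⟩
  · -- I - β * σ ≤ EI
    have hTge : max t 0 ≤ tauEI t := max_le (tau_ge t) (tau_pos t).le
    have e1 : ν * σ * max t 0 ≤ EI := by
      rw [hEI]
      exact mul_le_mul_of_nonneg_left hTge hνσ.le
    rw [hmax] at e1
    have e2 : I - β * σ ≤ max (μ - M) 0 := by
      rw [hI]
      have l1 := le_max_left (μ - M) 0
      have l2 := le_max_right (μ - M) 0
      have : max 0 (f - M) ≤ max (μ - M) 0 + β * σ :=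
        max_le (by linarith) (by linarith)
      linarith
    linarith
  · -- ratio bound
    rw [hnegb, hI, hEI]
    rcases le_total (f - M) 0 with hfM | hfM
    · rw [max_eq_left hfM]
      rw [mul_zero]
      exact mul_nonneg hνσ.le (tau_pos t).le
    · rw [max_eq_right hfM]
      have hIle : f - M ≤ ν * σ * (t + b) := by
        have : f - M ≤ (μ - M) + β * σ := by linarith
        rw [hμM, hβσ] at this
        linarith [this]
      have htb : -b ≤ t := by nlinarith
      have hlin := lin hb htb
      rw [div_mul_eq_mul_div, div_le_iff₀ (tau_pos b)]
      calc tauEI (-b) * (f - M) ≤ tauEI (-b) * (ν * σ * (t + b)) :=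
            mul_le_mul_of_nonneg_left hIle (tau_pos _).le
        _ = ν * σ * (tauEI (-b) * (t + b)) := by ring
        _ ≤ ν * σ * (tauEI t * tauEI b) := mul_le_mul_of_nonneg_left hlin hνσ.le
        _ = ν * σ * tauEI t * tauEI b := by ring
  · -- upper bound
    have e1 : EI ≤ ν * σ * (max t 0 + stdNormalPdf 0) := by
      rw [hEI]
      exact mul_le_mul_of_nonneg_left (tau_le t) hνσ.le
    rw [mul_add, hmax] at e1
    have e2 : max (μ - M) 0 ≤ max 0 (f - M) + β * σ := by
      have l1 := le_max_right 0 (f - M)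
      have l2 := le_max_left (0:ℝ) (f - M)
      exact max_le (by linarith) (by linarith)
    have e3 : ν * σ * stdNormalPdf 0 ≤ ν * σ * 1 :=
      mul_le_mul_of_nonneg_left pdf_zero_le_one hνσ.le
    rw [hI]
    nlinarith [e1, e2, e3]
end

section
/- Let n ≥ 1, σ > 0, let K be an n×n real symmetric positive semidefinite matrix with all diagonal entries K_{i,i} ≤ 1, and let v ∈ ℝⁿ be such that the bordered (n+1)×(n+1) matrix [[K, v], [vᵀ, 1]] is positive semidefinite. Then vᵀ (K + σ² I)^{−1} v ≤ n / (n + σ²); equivalently, the posterior variance 1 − vᵀ (K + σ² I)^{−1} v is at least σ² / (n + σ²). -/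
open Matrix

/-- If `K` is `n×n` symmetric PSD with diagonal entries at most 1, `σ > 0`,
and the bordered matrix `[[K, v], [vᵀ, 1]]` is PSD, then
`vᵀ (K + σ²I)⁻¹ v ≤ n / (n + σ²)`; equivalently the posterior variance
`1 − vᵀ (K + σ²I)⁻¹ v` is at least `σ² / (n + σ²)`. -/
theorem posterior_variance_lower_bound
    (n : ℕ) (hn : 1 ≤ n) (σ : ℝ) (hσ : 0 < σ)
    (K : Matrix (Fin n) (Fin n) ℝ) (hK : K.PosSemidef) (hdiag : ∀ i, K i i ≤ 1)
    (v : Fin n → ℝ)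
    (hB : (Matrix.fromBlocks K
        (Matrix.of fun i (_ : Unit) => v i)
        (Matrix.of fun (_ : Unit) j => v j)
        (Matrix.of fun (_ : Unit) (_ : Unit) => (1 : ℝ))).PosSemidef) :
    v ⬝ᵥ (K + σ ^ 2 • 1)⁻¹.mulVec v ≤ n / (n + σ ^ 2) ∧
      σ ^ 2 / (n + σ ^ 2) ≤ 1 - v ⬝ᵥ (K + σ ^ 2 • 1)⁻¹.mulVec v := by
  have hσ2 : (0:ℝ) < σ ^ 2 := by positivity
  have hn' : (1:ℝ) ≤ (n:ℝ) := by exact_mod_cast hn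
  set A : Matrix (Fin n) (Fin n) ℝ := K + σ ^ 2 • 1 with hA
  have hApd : A.PosDef := by
    refine Matrix.PosDef.posSemidef_add hK ?_
    rw [smul_one_eq_diagonal]
    exact Matrix.PosDef.diagonal (fun _ => hσ2)
  set w : Fin n → ℝ := A⁻¹.mulVec v with hw
  have hAw : A.mulVec w = v := by
    rw [hw, Matrix.mulVec_mulVec, Matrix.mul_nonsing_inv _ hApd.det_pos.ne'.isUnit,
      Matrix.one_mulVec]
  -- Key fact 1: (v ⬝ x)² ≤ x ⬝ K x for every x
  have key : ∀ x : Fin n → ℝ, (v ⬝ᵥ x) ^ 2 ≤ x ⬝ᵥ K.mulVec x := by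
    intro x
    set t : ℝ := -(v ⬝ᵥ x) with ht
    have h := hB.dotProduct_mulVec_nonneg (Sum.elim x (fun _ => t))
    have hBt : (Matrix.of fun i (_ : Unit) => v i) *ᵥ (fun _ : Unit => t)
        = fun i => v i * t := by
      ext i; simp [Matrix.mulVec, dotProduct]
    have hCx : (Matrix.of fun (_ : Unit) j => v j) *ᵥ x = fun _ : Unit => v ⬝ᵥ x := by
      ext u; simp [Matrix.mulVec, dotProduct]
    have hDt : (Matrix.of fun (_ : Unit) (_ : Unit) => (1:ℝ)) *ᵥ (fun _ : Unit => t)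
        = fun _ : Unit => t := by
      ext u; simp [Matrix.mulVec, dotProduct]
    rw [star_trivial, Matrix.fromBlocks_mulVec] at h
    simp only [Sum.elim_comp_inl, Sum.elim_comp_inr] at h
    rw [hBt, hCx, hDt, Matrix.dotProduct_block] at h
    simp only [Sum.elim_comp_inl, Sum.elim_comp_inr, dotProduct_add] at h
    have h1 : x ⬝ᵥ (fun i => v i * t) = (x ⬝ᵥ v) * t := by
      simp [dotProduct, Finset.sum_mul, mul_assoc]
    have h2 : (fun _ : Unit => t) ⬝ᵥ (fun _ : Unit => v ⬝ᵥ x) = t * (v ⬝ᵥ x) := by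
      simp [dotProduct]
    have h3 : (fun _ : Unit => t) ⬝ᵥ (fun _ : Unit => t) = t * t := by
      simp [dotProduct]
    rw [h1, h2, h3] at h
    have hcomm : x ⬝ᵥ v = v ⬝ᵥ x := dotProduct_comm x v
    rw [hcomm] at h
    nlinarith [h]
  -- Key fact 2: |K i j| ≤ 1
  have hent : ∀ i j, |K i j| ≤ 1 := by
    intro i j
    have hsym : K j i = K i j := by
      have := hK.1
      rw [Matrix.IsHermitian] at this
      calc K j i = Kᵀ i j := rfl
        _ = K i j := by rw [← Matrix.conjTranspose_eq_transpose_of_trivial, this]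
    by_cases hij : i = j
    · subst hij
      have h0 : 0 ≤ K i i := by
        have := hK.dotProduct_mulVec_nonneg (Pi.single i 1)
        simpa [single_dotProduct, Matrix.mulVec_single] using this
      rw [abs_le]; constructor <;> [linarith [hdiag i]; exact hdiag i]
    · set c : ℝ := if 0 ≤ K i j then -1 else 1 with hc
      have h := hK.dotProduct_mulVec_nonneg (Pi.single i 1 + Pi.single j c)
      rw [star_trivial, Matrix.mulVec_add, Matrix.mulVec_single, Matrix.mulVec_single,
        add_dotProduct, single_dotProduct, single_dotProduct] at h
      simp only [Pi.add_apply, one_mul] at h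
      have h' : 0 ≤ K i i + K i j * c + c * (K j i + K j j * c) := by
        simpa using h
      rw [hsym] at h'
      clear h
      have h0i : 0 ≤ K i i := by
        have := hK.dotProduct_mulVec_nonneg (Pi.single i 1)
        simpa [single_dotProduct, Matrix.mulVec_single] using this
      have h0j : 0 ≤ K j j := by
        have := hK.dotProduct_mulVec_nonneg (Pi.single j 1)
        simpa [single_dotProduct, Matrix.mulVec_single] using this
      rw [abs_le]
      by_cases hpos : 0 ≤ K i j
      · simp only [hc, if_pos hpos] at h'
        constructor
        · linarith
        · nlinarith [hdiag i, hdiag j]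
      · simp only [hc, if_neg hpos] at h'
        push_neg at hpos
        constructor
        · nlinarith [hdiag i, hdiag j]
        · linarith
  -- Key fact 3: w ⬝ K w ≤ n * (w ⬝ w)
  have habs : w ⬝ᵥ K.mulVec w ≤ (n:ℝ) * (w ⬝ᵥ w) := by
    have h1 : w ⬝ᵥ K.mulVec w ≤ (∑ i, |w i|) ^ 2 := by
      have : w ⬝ᵥ K.mulVec w = ∑ i, ∑ j, w i * (K i j * w j) := by
        simp [dotProduct, Matrix.mulVec, Finset.mul_sum]
      rw [this, sq, Finset.sum_mul_sum]
      refine Finset.sum_le_sum fun i _ => Finset.sum_le_sum fun j _ => ?_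
      calc w i * (K i j * w j) ≤ |w i * (K i j * w j)| := le_abs_self _
        _ = |w i| * (|K i j| * |w j|) := by rw [abs_mul, abs_mul]
        _ ≤ |w i| * (1 * |w j|) := by
            refine mul_le_mul_of_nonneg_left ?_ (abs_nonneg _)
            exact mul_le_mul_of_nonneg_right (hent i j) (abs_nonneg _)
        _ = |w i| * |w j| := by ring
    have h2 : (∑ i, |w i|) ^ 2 ≤ (n:ℝ) * ∑ i, |w i| ^ 2 := by
      have := sq_sum_le_card_mul_sum_sq (s := (Finset.univ : Finset (Fin n)))
        (f := fun i => |w i|)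
      simpa using this
    have h3 : ∑ i, |w i| ^ 2 = w ⬝ᵥ w := by
      simp [dotProduct, sq_abs, sq]
    linarith [h1, h2.trans_eq (by rw [h3])]
  -- put it together
  set s : ℝ := v ⬝ᵥ w with hs
  have hwb : (0:ℝ) ≤ w ⬝ᵥ w := Finset.sum_nonneg fun i _ => mul_self_nonneg _
  have hdecomp : s = w ⬝ᵥ K.mulVec w + σ ^ 2 * (w ⬝ᵥ w) := by
    rw [hs, ← hAw, dotProduct_comm, hA, Matrix.add_mulVec, dotProduct_add,
      Matrix.smul_mulVec, Matrix.one_mulVec, dotProduct_smul, smul_eq_mul]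
  have hsq : s ^ 2 ≤ w ⬝ᵥ K.mulVec w := key w
  have hmain : s * ((n:ℝ) + σ ^ 2) ≤ (n:ℝ) := by
    set a := w ⬝ᵥ K.mulVec w
    set b := w ⬝ᵥ w
    rcases le_or_gt s 0 with hs0 | hs0
    · nlinarith
    · nlinarith [mul_pos hs0 hs0]
  have hpos : (0:ℝ) < (n:ℝ) + σ ^ 2 := by linarith
  have hfirst : s ≤ (n:ℝ) / ((n:ℝ) + σ ^ 2) := by
    rw [le_div_iff₀ hpos]; exact hmain
  refine ⟨hfirst, ?_⟩
  have hsum : (n:ℝ) / ((n:ℝ) + σ ^ 2) + σ ^ 2 / ((n:ℝ) + σ ^ 2) = 1 := by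
    field_simp
  linarith
end
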